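/- arXiv:math/0503325 — 6 statements merged into one kernel-verified Lean document; each statement's English description precedes it below -/
import Mathlib

section
/- The sequence of rational functions g_n converges locally uniformly on ℂ∖K to a holomorphic function g; that is, there exists a function g, holomorphic on ℂ∖K, such that g_n converges to g uniformly on every compact subset of ℂ∖K. -/
open Filter Topology


lemma aux_finsum_le {a b : ℕ → ℝ} (hab0 : a 0 < b 0)
    (hj : ∀ j : ℕ, 1 ≤ j → a 0 < a j ∧ a j < b j ∧ b j < b 0)
    (hdisj : ∀ i j : ℕ, 1 ≤ i → 1 ≤ j → i ≠ j →
      Disjoint (Set.Icc (a i) (b i)) (Set.Icc (a j) (b j)))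
    (S : Finset ℕ) (hS : ∀ j ∈ S, 1 ≤ j) :
    ∑ j ∈ S, (b j - a j) ≤ b 0 - a 0 := by
  have hpd : (↑S : Set ℕ).PairwiseDisjoint fun j => Set.Ioo (a j) (b j) := by
    intro i hi j hjS hij
    exact (hdisj i j (hS i hi) (hS j hjS) hij).mono Set.Ioo_subset_Icc_self
      Set.Ioo_subset_Icc_self
  have hm : MeasureTheory.volume (⋃ j ∈ S, Set.Ioo (a j) (b j)) =
      ∑ j ∈ S, MeasureTheory.volume (Set.Ioo (a j) (b j)) :=
    MeasureTheory.measure_biUnion_finset hpd fun j _ => measurableSet_Ioo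
  have hsub : (⋃ j ∈ S, Set.Ioo (a j) (b j)) ⊆ Set.Icc (a 0) (b 0) := by
    intro x hx
    simp only [Set.mem_iUnion] at hx
    obtain ⟨k, hkS, hxk⟩ := hx
    have hk := hj k (hS k hkS)
    exact ⟨by linarith [hxk.1], by linarith [hxk.2]⟩
  have hle := MeasureTheory.measure_mono (μ := MeasureTheory.volume) hsub
  rw [hm] at hle
  rw [Real.volume_Icc] at hle
  have h3 : ∑ j ∈ S, ENNReal.ofReal (b j - a j) ≤ ENNReal.ofReal (b 0 - a 0) := by
    simpa [Real.volume_Ioo] using hle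
  rw [← ENNReal.ofReal_sum_of_nonneg (fun j hjS => by linarith [(hj j (hS j hjS)).2.1])] at h3
  exact (ENNReal.ofReal_le_ofReal_iff (by linarith)).mp h3

lemma aux_summable {a b : ℕ → ℝ} (hab0 : a 0 < b 0)
    (hj : ∀ j : ℕ, 1 ≤ j → a 0 < a j ∧ a j < b j ∧ b j < b 0)
    (hdisj : ∀ i j : ℕ, 1 ≤ i → 1 ≤ j → i ≠ j →
      Disjoint (Set.Icc (a i) (b i)) (Set.Icc (a j) (b j))) :
    Summable (fun j => if j = 0 then (0:ℝ) else b j - a j) := by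
  apply summable_of_sum_range_le (c := b 0 - a 0)
  · intro j
    by_cases h : j = 0
    · simp [h]
    · simp only [h, if_false]
      have := (hj j (by omega)).2.1
      linarith
  · intro n
    have h1 : ∑ i ∈ Finset.range n, (if i = 0 then (0:ℝ) else b i - a i) =
        ∑ i ∈ (Finset.range n).filter (fun j => ¬ j = 0), (b i - a i) := by
      rw [Finset.sum_filter]
      apply Finset.sum_congr rfl
      intro i _
      by_cases h : i = 0 <;> simp [h]
    rw [h1]
    exact aux_finsum_le hab0 hj hdisj _ (by intro j hjm; simp at hjm; omega)

/-- The sequence of rational functions `g n` converges locally uniformly on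
`ℂ ∖ K` (i.e. uniformly on every compact subset of `ℂ ∖ K`) to a function `G` holomorphic
on `ℂ ∖ K`. -/
theorem graphs_stmt0 (a b : ℕ → ℝ) (hab0 : a 0 < b 0)
    (hj : ∀ j : ℕ, 1 ≤ j → a 0 < a j ∧ a j < b j ∧ b j < b 0)
    (hdisj : ∀ i j : ℕ, 1 ≤ i → 1 ≤ j → i ≠ j →
      Disjoint (Set.Icc (a i) (b i)) (Set.Icc (a j) (b j)))
    (Kr : Set ℝ)
    (hKr : Kr = Set.Icc (a 0) (b 0) \ ⋃ j ∈ {j : ℕ | 1 ≤ j}, Set.Ioo (a j) (b j))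
    (K : Set ℂ) (hK : K = (fun x : ℝ => (x : ℂ)) '' Kr)
    (g : ℕ → ℂ → ℂ)
    (hg : ∀ n z, g n z = ((z - (a 0 : ℂ)) / (z - (b 0 : ℂ))) *
      ∏ j ∈ Finset.Icc 1 n, (z - (b j : ℂ)) / (z - (a j : ℂ))) :
    ∃ G : ℂ → ℂ, DifferentiableOn ℂ G Kᶜ ∧
      ∀ L : Set ℂ, L ⊆ Kᶜ → IsCompact L →
        TendstoUniformlyOn (fun n z => g n z) G atTop L := by

  -- membership facts
  have hmemKr : ∀ x : ℝ, a 0 ≤ x → x ≤ b 0 →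
      (∀ i : ℕ, 1 ≤ i → x ∉ Set.Ioo (a i) (b i)) → (x : ℂ) ∈ K := by
    intro x h1 h2 h3
    rw [hK]
    refine ⟨x, ?_, rfl⟩
    rw [hKr]
    refine ⟨⟨h1, h2⟩, ?_⟩
    intro hmem
    simp only [Set.mem_iUnion, Set.mem_setOf_eq] at hmem
    obtain ⟨i, hi1, hio⟩ := hmem
    exact h3 i hi1 hio
  have hKa : ∀ j : ℕ, 1 ≤ j → (a j : ℂ) ∈ K := by
    intro j hj1
    have hjj := hj j hj1
    apply hmemKr _ (le_of_lt hjj.1) (by linarith [hjj.2.1, hjj.2.2])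
    intro i hi1 hio
    by_cases hij : i = j
    · subst hij; exact lt_irrefl _ hio.1
    · exact Set.disjoint_left.mp (hdisj i j hi1 hj1 hij)
        ⟨le_of_lt hio.1, le_of_lt hio.2⟩ ⟨le_rfl, le_of_lt hjj.2.1⟩
  have hKa0 : ((a 0 : ℝ) : ℂ) ∈ K := by
    apply hmemKr _ le_rfl (le_of_lt hab0)
    intro i hi1 hio
    exact absurd hio.1 (by linarith [(hj i hi1).1])
  have hKb0 : ((b 0 : ℝ) : ℂ) ∈ K := by
    apply hmemKr _ (le_of_lt hab0) le_rfl
    intro i hi1 hio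
    exact absurd hio.2 (by linarith [(hj i hi1).2.2])
  -- K is compact and closed
  have hKrclosed : IsClosed Kr := by
    rw [hKr]
    exact isClosed_Icc.sdiff (isOpen_biUnion fun j _ => isOpen_Ioo)
  have hKrcomp : IsCompact Kr :=
    IsCompact.of_isClosed_subset isCompact_Icc hKrclosed (hKr ▸ Set.diff_subset)
  have hKcomp : IsCompact K := hK ▸ hKrcomp.image Complex.continuous_ofReal
  have hKclosed : IsClosed K := hKcomp.isClosed
  have hopen : IsOpen Kᶜ := hKclosed.isOpen_compl
  -- differentiability of each g n on Kᶜ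
  have hdiff : ∀ n, DifferentiableOn ℂ (fun z => g n z) Kᶜ := by
    intro n
    have he : (fun z => g n z) = fun z => ((z - (a 0 : ℂ)) / (z - (b 0 : ℂ))) *
        ∏ j ∈ Finset.Icc 1 n, (z - (b j : ℂ)) / (z - (a j : ℂ)) := funext fun z => hg n z
    rw [he]
    apply DifferentiableOn.mul
    · exact DifferentiableOn.div
        ((differentiable_id.sub_const _).differentiableOn)
        ((differentiable_id.sub_const _).differentiableOn)
        (fun z hz => sub_ne_zero.mpr fun h => hz (by rw [h]; exact hKb0))
    · exact DifferentiableOn.fun_finsetProd fun j hjm => DifferentiableOn.div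
        ((differentiable_id.sub_const _).differentiableOn)
        ((differentiable_id.sub_const _).differentiableOn)
        (fun z hz => sub_ne_zero.mpr fun h =>
          hz (by rw [h]; exact hKa j (Finset.mem_Icc.mp hjm).1))
  -- the summable length sequence
  have hcs : Summable (fun j => if j = 0 then (0:ℝ) else b j - a j) :=
    aux_summable hab0 hj hdisj
  have hcnonneg : ∀ j : ℕ, 0 ≤ (if j = 0 then (0:ℝ) else b j - a j) := by
    intro j
    by_cases h : j = 0
    · simp [h]
    · simp only [h, if_false]
      have := (hj j (by omega)).2.1
      linarith
  set T : ℝ := ∑' j, (if j = 0 then (0:ℝ) else b j - a j) with hT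
  -- the limit function
  set G : ℂ → ℂ := fun z => g 0 z + ∑' n : ℕ, (g (n + 1) z - g n z) with hG
  -- main claim: uniform convergence on compacts
  have hmain : ∀ L : Set ℂ, L ⊆ Kᶜ → IsCompact L →
      TendstoUniformlyOn (fun n z => g n z) G atTop L := by
    intro L hL hLc
    rcases L.eq_empty_or_nonempty with hLe | hLne
    · rw [hLe]; exact tendstoUniformlyOn_empty
    -- positive distance to K
    obtain ⟨z0, hz0L, hz0min⟩ :=
      hLc.exists_isMinOn hLne (Metric.continuous_infDist_pt K).continuousOn
    set δ : ℝ := Metric.infDist z0 K with hδdef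
    have hδpos : 0 < δ :=
      (hKclosed.notMem_iff_infDist_pos ⟨_, hKa0⟩).mp (hL hz0L)
    have hδle : ∀ z ∈ L, ∀ w, w ∈ K → δ ≤ ‖z - w‖ := by
      intro z hz w hw
      calc δ ≤ Metric.infDist z K := isMinOn_iff.mp hz0min z hz
        _ ≤ dist z w := Metric.infDist_le_dist_of_mem hw
        _ = ‖z - w‖ := dist_eq_norm z w
    have hne : ∀ z ∈ L, ∀ j : ℕ, 1 ≤ j → z - (a j : ℂ) ≠ 0 := by
      intro z hz j hj1 h
      have := hδle z hz _ (hKa j hj1)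
      rw [h, norm_zero] at this
      linarith
    -- norm of the real difference
    have hnab : ∀ j : ℕ, 1 ≤ j → ‖((a j : ℂ) - (b j : ℂ))‖ = b j - a j := by
      intro j hj1
      have h1 : ((a j : ℂ) - (b j : ℂ)) = ((a j - b j : ℝ) : ℂ) := by push_cast; ring
      rw [h1, Complex.norm_real, Real.norm_eq_abs,
        abs_of_nonpos (by linarith [(hj j hj1).2.1]), neg_sub]
    -- factor bound
    have hfactor : ∀ j : ℕ, 1 ≤ j → ∀ z ∈ L,
        ‖(z - (b j : ℂ)) / (z - (a j : ℂ))‖ ≤ Real.exp ((b j - a j) / δ) := by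
      intro j hj1 z hz
      have hza : δ ≤ ‖z - (a j : ℂ)‖ := hδle z hz _ (hKa j hj1)
      have hzne := hne z hz j hj1
      have heq : (z - (b j : ℂ)) / (z - (a j : ℂ)) =
          1 + ((a j : ℂ) - (b j : ℂ)) / (z - (a j : ℂ)) := by
        field_simp
        ring
      calc ‖(z - (b j : ℂ)) / (z - (a j : ℂ))‖
          = ‖1 + ((a j : ℂ) - (b j : ℂ)) / (z - (a j : ℂ))‖ := by rw [heq]
        _ ≤ ‖(1 : ℂ)‖ + ‖((a j : ℂ) - (b j : ℂ)) / (z - (a j : ℂ))‖ := norm_add_le _ _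
        _ = 1 + (b j - a j) / ‖z - (a j : ℂ)‖ := by
            rw [norm_one, norm_div, hnab j hj1]
        _ ≤ 1 + (b j - a j) / δ := by
            have hnum : 0 ≤ b j - a j := by linarith [(hj j hj1).2.1]
            gcongr
        _ ≤ Real.exp ((b j - a j) / δ) := by
            linarith [Real.add_one_le_exp ((b j - a j) / δ)]
    -- partial product bound
    have hprodle : ∀ n : ℕ, ∀ z ∈ L,
        ‖∏ j ∈ Finset.Icc 1 n, (z - (b j : ℂ)) / (z - (a j : ℂ))‖ ≤ Real.exp (T / δ) := by
      intro n z hz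
      calc ‖∏ j ∈ Finset.Icc 1 n, (z - (b j : ℂ)) / (z - (a j : ℂ))‖
          = ∏ j ∈ Finset.Icc 1 n, ‖(z - (b j : ℂ)) / (z - (a j : ℂ))‖ := norm_prod _ _
        _ ≤ ∏ j ∈ Finset.Icc 1 n, Real.exp ((b j - a j) / δ) :=
            Finset.prod_le_prod (fun j _ => norm_nonneg _)
              (fun j hjm => hfactor j (Finset.mem_Icc.mp hjm).1 z hz)
        _ = Real.exp (∑ j ∈ Finset.Icc 1 n, (b j - a j) / δ) := (Real.exp_sum _ _).symm
        _ ≤ Real.exp (T / δ) := by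
            apply Real.exp_le_exp.mpr
            rw [← Finset.sum_div]
            have hsum1 : ∑ j ∈ Finset.Icc 1 n, (b j - a j) =
                ∑ j ∈ Finset.Icc 1 n, (if j = 0 then (0:ℝ) else b j - a j) := by
              apply Finset.sum_congr rfl
              intro j hjm
              rw [if_neg (by have := (Finset.mem_Icc.mp hjm).1; omega)]
            have hsumT : ∑ j ∈ Finset.Icc 1 n, (b j - a j) ≤ T := by
              rw [hsum1]
              exact Summable.sum_le_tsum _ (fun j _ => hcnonneg j) hcs
            gcongr
    -- bound on (z - a0)/(z - b0)
    obtain ⟨M, hM⟩ := hLc.exists_bound_of_continuousOn (f := fun z => (z - (a 0 : ℂ)) / (z - (b 0 : ℂ)))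
      (ContinuousOn.div ((continuous_id.sub continuous_const).continuousOn)
        ((continuous_id.sub continuous_const).continuousOn)
        (fun z hz => sub_ne_zero.mpr fun h => (hL hz) (by rw [h]; exact hKb0)))
    have hM0 : 0 ≤ M := le_trans (norm_nonneg _) (hM z0 hz0L)
    -- bound on g n
    have hgb : ∀ n : ℕ, ∀ z ∈ L, ‖g n z‖ ≤ M * Real.exp (T / δ) := by
      intro n z hz
      rw [hg, norm_mul]
      exact mul_le_mul (hM z hz) (hprodle n z hz) (norm_nonneg _) hM0
    -- step bound
    set u : ℕ → ℝ := fun n => M * Real.exp (T / δ) * ((b (n + 1) - a (n + 1)) / δ) with hu_def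
    have hstep : ∀ n : ℕ, ∀ z ∈ L, ‖g (n + 1) z - g n z‖ ≤ u n := by
      intro n z hz
      have h1 : 1 ≤ n + 1 := by omega
      have hzne := hne z hz (n + 1) h1
      have hf1 : (z - (b (n + 1) : ℂ)) / (z - (a (n + 1) : ℂ)) - 1 =
          ((a (n + 1) : ℂ) - (b (n + 1) : ℂ)) / (z - (a (n + 1) : ℂ)) := by
        rw [eq_div_iff hzne, sub_mul, div_mul_cancel₀ _ hzne]
        ring
      have h2 : g (n + 1) z = g n z * ((z - (b (n + 1) : ℂ)) / (z - (a (n + 1) : ℂ))) := by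
        rw [hg, hg, Finset.prod_Icc_succ_top h1]
        ring
      have hgsucc : g (n + 1) z - g n z =
          g n z * (((a (n + 1) : ℂ) - (b (n + 1) : ℂ)) / (z - (a (n + 1) : ℂ))) := by
        rw [← hf1, h2]
        ring
      rw [hgsucc, norm_mul, norm_div, hnab (n + 1) h1]
      apply mul_le_mul (hgb n z hz) ?_
        (div_nonneg (by linarith [(hj (n + 1) h1).2.1]) (norm_nonneg _))
        (by positivity)
      gcongr
      · have := (hj (n + 1) h1).2.1; linarith
      · exact hδle z hz _ (hKa (n + 1) h1)
    -- summability of u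
    have hu : Summable u := by
      apply Summable.mul_left
      apply Summable.div_const
      apply Summable.congr ((summable_nat_add_iff 1).mpr hcs)
      intro n
      simp
    -- M-test
    have hMtest := tendstoUniformlyOn_tsum_nat hu (s := L)
      (f := fun n z => g (n + 1) z - g n z) (fun n z hz => hstep n z hz)
    -- transfer to g
    have hconst : TendstoUniformlyOn (fun _ : ℕ => fun z => g 0 z) (fun z => g 0 z) atTop L :=
      fun v hv => Eventually.of_forall fun n z _ => refl_mem_uniformity hv
    have H2 := hMtest.add hconst
    have hFeq : ∀ N : ℕ, Set.EqOn
        (((fun N : ℕ => fun z => ∑ n ∈ Finset.range N, (g (n + 1) z - g n z)) +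
          (fun _ : ℕ => fun z => g 0 z)) N)
        ((fun n z => g n z) N) L := by
      intro N z _
      simp only [Pi.add_apply]
      rw [Finset.sum_range_sub (fun k => g k z)]
      ring
    have hgeq : Set.EqOn ((fun z => ∑' n : ℕ, (g (n + 1) z - g n z)) + fun z => g 0 z) G L := by
      intro z _
      simp only [Pi.add_apply, hG]
      ring
    exact (H2.congr (Eventually.of_forall hFeq)).congr_right hgeq
  -- holomorphy of the limit
  have hTLU : TendstoLocallyUniformlyOn (fun n z => g n z) G atTop Kᶜ :=
    (tendstoLocallyUniformlyOn_iff_forall_isCompact hopen).mpr hmain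
  exact ⟨G, hTLU.differentiableOn (Eventually.of_forall hdiff) hopen, hmain⟩
end

section
/- If K has Lebesgue measure zero (equivalently, Σ_{j≥1}(b_j − a_j) = b₀ − a₀), then g_n converges to the constant function 1 uniformly on every compact subset of ℂ not meeting K; in particular the limit function g is identically 1 on ℂ∖K. -/
open Filter Topology MeasureTheory

lemma graphs_log_integral (x u v : ℝ) (huv : u ≤ v) (hv : v < x) :
    Real.log (x - u) - Real.log (x - v) = ∫ t in Set.Ioo u v, (x - t)⁻¹ := by
  have hcont : ContinuousOn (fun t : ℝ => (x - t)⁻¹) (Set.uIcc u v) := by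
    apply ContinuousOn.inv₀ ((continuous_const.sub continuous_id).continuousOn)
    intro t ht
    rw [Set.uIcc_of_le huv] at ht
    have : t < x := lt_of_le_of_lt ht.2 hv
    exact sub_ne_zero.mpr this.ne'
  have hderiv : ∀ t ∈ Set.uIcc u v,
      HasDerivAt (fun s : ℝ => -Real.log (x - s)) ((x - t)⁻¹) t := by
    intro t ht
    rw [Set.uIcc_of_le huv] at ht
    have hxt : (0:ℝ) < x - t := by
      have := ht.2; linarith
    have h1 : HasDerivAt (fun s : ℝ => x - s) (-1) t := (hasDerivAt_id t).const_sub x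
    have h2 := (Real.hasDerivAt_log hxt.ne').comp t h1
    have h3 := h2.neg
    simp at h3
    exact h3
  have h := intervalIntegral.integral_eq_sub_of_hasDerivAt hderiv hcont.intervalIntegrable
  rw [intervalIntegral.integral_of_le huv, MeasureTheory.integral_Ioc_eq_integral_Ioo] at h
  rw [h]
  ring

lemma graphs_pointwise (a b : ℕ → ℝ) (hab0 : a 0 < b 0)
    (hj : ∀ j : ℕ, 1 ≤ j → a 0 < a j ∧ a j < b j ∧ b j < b 0)
    (hdisj : ∀ i j : ℕ, 1 ≤ i → 1 ≤ j → i ≠ j →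
      Disjoint (Set.Icc (a i) (b i)) (Set.Icc (a j) (b j)))
    (Kr : Set ℝ)
    (hKr : Kr = Set.Icc (a 0) (b 0) \ ⋃ j ∈ {j : ℕ | 1 ≤ j}, Set.Ioo (a j) (b j))
    (hvol : MeasureTheory.volume Kr = 0) (x : ℝ) (hx : b 0 < x) :
    Tendsto (fun n => ((x - a 0)/(x - b 0)) * ∏ j ∈ Finset.Icc 1 n, (x - b j)/(x - a j))
      atTop (𝓝 1) := by
  set f : ℝ → ℝ := fun t => (x - t)⁻¹ with hfdef
  set U : ℕ → Set ℝ := fun n => ⋃ j ∈ Finset.Icc 1 n, Set.Ioo (a j) (b j) with hUdef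
  set E : ℕ → Set ℝ := fun n => Set.Icc (a 0) (b 0) \ U n with hEdef
  have hxa : ∀ t, t ≤ b 0 → 0 < x - t := fun t ht => by linarith
  have hUsub : ∀ n, U n ⊆ Set.Icc (a 0) (b 0) := by
    intro n t ht
    simp only [hUdef, Set.mem_iUnion] at ht
    obtain ⟨j, hjmem, htj⟩ := ht
    obtain ⟨h1, h2, h3⟩ := hj j (Finset.mem_Icc.mp hjmem).1
    exact ⟨by linarith [htj.1], by linarith [htj.2]⟩
  have hUmeas : ∀ n, MeasurableSet (U n) := fun n =>
    (Finset.Icc 1 n).measurableSet_biUnion (fun j _ => measurableSet_Ioo)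
  have hfcont : ContinuousOn f (Set.Icc (a 0) (b 0)) := by
    apply ContinuousOn.inv₀ ((continuous_const.sub continuous_id).continuousOn)
    intro t ht
    exact (hxa t ht.2).ne'
  have hfint : IntegrableOn f (Set.Icc (a 0) (b 0)) := hfcont.integrableOn_Icc
  have hUint : ∀ n, ∫ t in U n, f t
      = ∑ j ∈ Finset.Icc 1 n, ∫ t in Set.Ioo (a j) (b j), f t := by
    intro n
    apply MeasureTheory.integral_biUnion_finset
    · exact fun j _ => measurableSet_Ioo
    · intro i hi j hjm hij
      exact (hdisj i j (Finset.mem_Icc.mp hi).1 (Finset.mem_Icc.mp hjm).1 hij).mono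
        Set.Ioo_subset_Icc_self Set.Ioo_subset_Icc_self
    · intro j hjm
      apply hfint.mono_set
      intro t ht
      obtain ⟨h1, h2, h3⟩ := hj j (Finset.mem_Icc.mp hjm).1
      exact ⟨by linarith [ht.1], by linarith [ht.2]⟩
  have hEint : ∀ n, ∫ t in E n, f t
      = (∫ t in Set.Icc (a 0) (b 0), f t) - ∫ t in U n, f t := fun n =>
    MeasureTheory.integral_diff (hUmeas n) hfint (hUsub n)
  -- positivity of factors
  have hfacpos : ∀ j : ℕ, 1 ≤ j → 0 < (x - b j)/(x - a j) := by
    intro j hj1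
    obtain ⟨h1, h2, h3⟩ := hj j hj1
    exact div_pos (hxa _ (by linarith)) (hxa _ (by linarith))
  have hprodpos : ∀ n, 0 < ∏ j ∈ Finset.Icc 1 n, (x - b j)/(x - a j) := by
    intro n
    exact Finset.prod_pos fun j hjm => hfacpos j (Finset.mem_Icc.mp hjm).1
  have h0pos : 0 < (x - a 0)/(x - b 0) :=
    div_pos (hxa _ (by linarith)) (hxa _ (by linarith))
  have hPpos : ∀ n, 0 < ((x - a 0)/(x - b 0)) * ∏ j ∈ Finset.Icc 1 n, (x - b j)/(x - a j) :=
    fun n => mul_pos h0pos (hprodpos n)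
  -- log of the product is the integral over E n
  have hlogP : ∀ n, Real.log (((x - a 0)/(x - b 0))
      * ∏ j ∈ Finset.Icc 1 n, (x - b j)/(x - a j)) = ∫ t in E n, f t := by
    intro n
    rw [Real.log_mul h0pos.ne' (hprodpos n).ne',
      Real.log_div (hxa _ (by linarith)).ne' (hxa _ (le_refl _)).ne',
      Real.log_prod (fun j hjm => (hfacpos j (Finset.mem_Icc.mp hjm).1).ne')]
    have h0 : Real.log (x - a 0) - Real.log (x - b 0) = ∫ t in Set.Icc (a 0) (b 0), f t := by
      rw [MeasureTheory.integral_Icc_eq_integral_Ioo]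
      exact graphs_log_integral x (a 0) (b 0) hab0.le hx
    have hjlog : ∀ j ∈ Finset.Icc 1 n,
        Real.log ((x - b j)/(x - a j)) = -∫ t in Set.Ioo (a j) (b j), f t := by
      intro j hjm
      obtain ⟨h1, h2, h3⟩ := hj j (Finset.mem_Icc.mp hjm).1
      rw [Real.log_div (hxa _ (by linarith)).ne' (hxa _ (by linarith)).ne']
      have := graphs_log_integral x (a j) (b j) h2.le (by linarith)
      linarith
    rw [Finset.sum_congr rfl hjlog, hEint n, hUint n, Finset.sum_neg_distrib]
    linarith
  have hPexp : ∀ n, ((x - a 0)/(x - b 0)) * ∏ j ∈ Finset.Icc 1 n, (x - b j)/(x - a j)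
      = Real.exp (∫ t in E n, f t) := fun n => by
    rw [← hlogP n, Real.exp_log (hPpos n)]
  -- measure of E n tends to 0
  have hEmeasSet : ∀ n, MeasurableSet (E n) := fun n => measurableSet_Icc.diff (hUmeas n)
  have hEfin : ∀ n, volume (E n) < ⊤ := by
    intro n
    exact lt_of_le_of_lt (measure_mono Set.diff_subset) measure_Icc_lt_top
  have hEanti : Antitone E := by
    intro m n hmn t ht
    refine ⟨ht.1, ?_⟩
    intro htU
    apply ht.2
    simp only [hUdef, Set.mem_iUnion] at htU ⊢
    obtain ⟨j, hjm, htj⟩ := htU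
    have := Finset.mem_Icc.mp hjm
    exact ⟨j, Finset.mem_Icc.mpr ⟨this.1, le_trans this.2 hmn⟩, htj⟩
  have hInter : ⋂ n, E n = Kr := by
    rw [hKr]
    ext t
    simp only [hEdef, hUdef, Set.mem_iInter, Set.mem_diff, Set.mem_iUnion, Finset.mem_Icc,
      Set.mem_setOf_eq]
    constructor
    · intro h
      refine ⟨(h 0).1, ?_⟩
      rintro ⟨j, hj1, htj⟩
      exact (h j).2 ⟨j, ⟨hj1, le_refl j⟩, htj⟩
    · rintro ⟨h1, h2⟩ n
      refine ⟨h1, ?_⟩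
      rintro ⟨j, ⟨hj1, _⟩, htj⟩
      exact h2 ⟨j, hj1, htj⟩
  have hmeasT : Tendsto (fun n => volume (E n)) atTop (𝓝 0) := by
    have := MeasureTheory.tendsto_measure_iInter_atTop
      (fun n => (hEmeasSet n).nullMeasurableSet) hEanti ⟨0, (hEfin 0).ne⟩
    rw [hInter, hvol] at this
    exact this
  have hrealT : Tendsto (fun n => (volume (E n)).toReal) atTop (𝓝 0) := by
    have h := (ENNReal.tendsto_toReal (show (0:ENNReal) ≠ ⊤ by simp)).comp hmeasT
    exact h
  -- squeeze the integral to 0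
  have hbound : ∀ n, ‖∫ t in E n, f t‖ ≤ (x - b 0)⁻¹ * (volume (E n)).toReal := by
    intro n
    apply MeasureTheory.norm_setIntegral_le_of_norm_le_const (hEfin n)
    intro t ht
    have ht' : t ∈ Set.Icc (a 0) (b 0) := ht.1
    have h1 : 0 < x - t := hxa t ht'.2
    have h2 : x - b 0 ≤ x - t := by linarith [ht'.2]
    rw [Real.norm_eq_abs, abs_of_pos (by positivity)]
    exact inv_anti₀ (hxa _ (le_refl _)) h2
  have hS0 : Tendsto (fun n => ∫ t in E n, f t) atTop (𝓝 0) := by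
    apply squeeze_zero_norm hbound
    have := hrealT.const_mul ((x - b 0)⁻¹)
    simpa using this
  have hfinal : Tendsto (fun n => Real.exp (∫ t in E n, f t)) atTop (𝓝 1) := by
    have := (Real.continuous_exp.tendsto 0).comp hS0
    rw [Real.exp_zero] at this
    exact this
  exact hfinal.congr fun n => (hPexp n).symm

lemma graphs_compl_preconnected (a0 b0 : ℝ) (K : Set ℂ)
    (hKprop : ∀ z ∈ K, z.im = 0 ∧ a0 ≤ z.re ∧ z.re ≤ b0) :
    IsPreconnected (Kᶜ : Set ℂ) := by
  set p : ℂ := ((a0 - 1 : ℝ) : ℂ) with hp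
  have hpK : p ∈ (Kᶜ : Set ℂ) := by
    intro h
    have := (hKprop p h).2.1
    simp only [hp, Complex.ofReal_re] at this
    linarith
  apply isPreconnected_of_forall p
  intro y hy
  set s : ℝ := if 0 ≤ y.im then 1 else -1 with hs
  set w : ℂ := y + s • Complex.I with hw
  set q : ℂ := p + s • Complex.I with hq
  refine ⟨segment ℝ y w ∪ segment ℝ w q ∪ segment ℝ q p, ?_, ?_, ?_, ?_⟩
  · -- subset of Kᶜ
    intro z hz hzK
    obtain ⟨him, hre1, hre2⟩ := hKprop z hzK
    rcases hz with (hz | hz) | hz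
    · rw [segment_eq_image] at hz
      obtain ⟨θ, hθ, rfl⟩ := hz
      have himz : ((1 - θ) • y + θ • w).im = y.im + θ * s := by
        simp [hw, Complex.add_im, Complex.smul_im]
        ring
      rw [himz] at him
      by_cases h0 : 0 ≤ y.im
      · rw [hs, if_pos h0] at him
        have hθ0 : θ = 0 := by linarith [hθ.1]
        have hy0 : y.im = 0 := by linarith [hθ.1]
        have heq : (1 - θ) • y + θ • w = y := by rw [hθ0]; simp
        beta_reduce at hzK
        rw [heq] at hzK
        exact hy hzK
      · rw [hs, if_neg h0] at him
        push_neg at h0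
        have : θ < 0 := by linarith
        linarith [hθ.1]
    · rw [segment_eq_image] at hz
      obtain ⟨θ, hθ, rfl⟩ := hz
      have himz : ((1 - θ) • w + θ • q).im = (1 - θ) * y.im + s := by
        simp [hw, hq, hp, Complex.add_im, Complex.smul_im]
        ring
      rw [himz] at him
      by_cases h0 : 0 ≤ y.im
      · rw [hs, if_pos h0] at him
        nlinarith [hθ.1, hθ.2]
      · rw [hs, if_neg h0] at him
        push_neg at h0
        nlinarith [hθ.1, hθ.2]
    · rw [segment_eq_image] at hz
      obtain ⟨θ, hθ, rfl⟩ := hz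
      have himz : ((1 - θ) • q + θ • p).im = (1 - θ) * s := by
        simp [hq, hp, Complex.add_im, Complex.smul_im]
      rw [himz] at him
      have hθ1 : θ = 1 := by
        by_cases h0 : 0 ≤ y.im
        · rw [hs, if_pos h0] at him; nlinarith
        · rw [hs, if_neg h0] at him; nlinarith
      have heq : (1 - θ) • q + θ • p = p := by rw [hθ1]; simp
      beta_reduce at hzK
      rw [heq] at hzK
      exact hpK hzK
  · exact Or.inr (right_mem_segment ℝ q p)
  · exact Or.inl (Or.inl (left_mem_segment ℝ y w))
  · refine IsPreconnected.union q ?_ (left_mem_segment ℝ q p) ?_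
      (convex_segment q p).isPreconnected
    · exact Or.inr (right_mem_segment ℝ w q)
    · exact IsPreconnected.union w (right_mem_segment ℝ y w) (left_mem_segment ℝ w q)
        (convex_segment y w).isPreconnected (convex_segment w q).isPreconnected

/-- If `K` has Lebesgue measure zero then `g n` converges to the constant
function `1` uniformly on every compact set not meeting `K`; in particular the limit
function `G` is identically `1` on `ℂ ∖ K`. -/
theorem graphs_stmt2 (a b : ℕ → ℝ) (hab0 : a 0 < b 0)
    (hj : ∀ j : ℕ, 1 ≤ j → a 0 < a j ∧ a j < b j ∧ b j < b 0)
    (hdisj : ∀ i j : ℕ, 1 ≤ i → 1 ≤ j → i ≠ j →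
      Disjoint (Set.Icc (a i) (b i)) (Set.Icc (a j) (b j)))
    (Kr : Set ℝ)
    (hKr : Kr = Set.Icc (a 0) (b 0) \ ⋃ j ∈ {j : ℕ | 1 ≤ j}, Set.Ioo (a j) (b j))
    (K : Set ℂ) (hK : K = (fun x : ℝ => (x : ℂ)) '' Kr)
    (g : ℕ → ℂ → ℂ)
    (hg : ∀ n z, g n z = ((z - (a 0 : ℂ)) / (z - (b 0 : ℂ))) *
      ∏ j ∈ Finset.Icc 1 n, (z - (b j : ℂ)) / (z - (a j : ℂ)))
    (G : ℂ → ℂ) (hGd : DifferentiableOn ℂ G Kᶜ)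
    (hGlim : ∀ L : Set ℂ, L ⊆ Kᶜ → IsCompact L →
      TendstoUniformlyOn (fun n z => g n z) G atTop L)
    (hvol : MeasureTheory.volume Kr = 0) :
    (∀ L : Set ℂ, IsCompact L → L ∩ K = ∅ →
      TendstoUniformlyOn (fun n z => g n z) (fun _ => (1 : ℂ)) atTop L) ∧
    Set.EqOn G (fun _ => (1 : ℂ)) Kᶜ := by
  have hKprop : ∀ z ∈ K, z.im = 0 ∧ a 0 ≤ z.re ∧ z.re ≤ b 0 := by
    intro z hz
    rw [hK] at hz
    obtain ⟨t, ht, rfl⟩ := hz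
    rw [hKr] at ht
    exact ⟨Complex.ofReal_im t, by simpa using ht.1.1, by simpa using ht.1.2⟩
  have hnotK : ∀ t : ℝ, b 0 < t → (t : ℂ) ∉ K := by
    intro t ht h
    have := (hKprop _ h).2.2
    simp only [Complex.ofReal_re] at this
    linarith
  have hKrclosed : IsClosed Kr := by
    rw [hKr, Set.diff_eq]
    exact isClosed_Icc.inter (isOpen_biUnion fun j _ => isOpen_Ioo).isClosed_compl
  have hKrcompact : IsCompact Kr :=
    isCompact_Icc.of_isClosed_subset hKrclosed (by rw [hKr]; exact Set.diff_subset)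
  have hKcompact : IsCompact K := by
    rw [hK]; exact hKrcompact.image Complex.continuous_ofReal
  have hKopen : IsOpen (Kᶜ : Set ℂ) := hKcompact.isClosed.isOpen_compl
  -- pointwise value of G on reals to the right of b 0
  have hGpt : ∀ t : ℝ, b 0 < t → G (t : ℂ) = 1 := by
    intro t ht
    have h1 : Tendsto (fun n => g n (t : ℂ)) atTop (𝓝 (G (t : ℂ))) :=
      (hGlim {(t : ℂ)} (by simpa using hnotK t ht) isCompact_singleton).tendsto_at rfl
    have h2 : Tendsto (fun n => g n (t : ℂ)) atTop (𝓝 1) := by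
      have hreal := graphs_pointwise a b hab0 hj hdisj Kr hKr hvol t ht
      have hcomp := (Complex.continuous_ofReal.tendsto 1).comp hreal
      simp only [Complex.ofReal_one] at hcomp
      apply hcomp.congr
      intro n
      simp only [Function.comp_apply]
      rw [hg]
      push_cast
      ring
    exact tendsto_nhds_unique h1 h2
  have hpre : IsPreconnected (Kᶜ : Set ℂ) := graphs_compl_preconnected (a 0) (b 0) K hKprop
  have hGan : AnalyticOnNhd ℂ G Kᶜ := hGd.analyticOnNhd hKopen
  have h1an : AnalyticOnNhd ℂ (fun _ => (1 : ℂ)) Kᶜ := analyticOnNhd_const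
  set z₀ : ℂ := ((b 0 + 1 : ℝ) : ℂ) with hz₀def
  have hz₀mem : z₀ ∈ (Kᶜ : Set ℂ) := hnotK _ (by linarith)
  have hfreq : ∃ᶠ z in 𝓝[≠] z₀, G z = (fun _ => (1 : ℂ)) z := by
    have hu : Tendsto (fun m : ℕ => ((b 0 + 1 + 1/(m+1) : ℝ) : ℂ)) atTop (𝓝[≠] z₀) := by
      rw [tendsto_nhdsWithin_iff]
      constructor
      · have hr : Tendsto (fun m : ℕ => (b 0 + 1 + 1/(m+1) : ℝ)) atTop (𝓝 (b 0 + 1)) := by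
          have h := tendsto_one_div_add_atTop_nhds_zero_nat (𝕜 := ℝ)
          simpa using tendsto_const_nhds.add h
        exact (Complex.continuous_ofReal.tendsto _).comp hr
      · filter_upwards with m
        simp only [Set.mem_compl_iff, Set.mem_singleton_iff, hz₀def, Complex.ofReal_inj]
        intro h
        have hm : (0:ℝ) < 1/(m+1) := by positivity
        linarith
    apply hu.frequently
    apply Filter.Eventually.frequently
    filter_upwards with m
    have hm : (0:ℝ) < 1/(m+1) := by positivity
    exact hGpt _ (by linarith)
  have hEq : Set.EqOn G (fun _ => (1 : ℂ)) Kᶜ :=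
    hGan.eqOn_of_preconnected_of_frequently_eq h1an hpre hz₀mem hfreq
  refine ⟨?_, hEq⟩
  intro L hLc hLK
  have hLsub : L ⊆ (Kᶜ : Set ℂ) := fun z hz hzK =>
    Set.eq_empty_iff_forall_notMem.mp hLK z ⟨hz, hzK⟩
  exact (hGlim L hLsub hLc).congr_right fun z hz => hEq (hLsub hz)
end

section
/- Let δ > 0 and set l = Σ_{j=0}^{n}(β_j − α_j). If z ∈ ℂ satisfies |z − β_j| ≥ δ for every 0 ≤ j ≤ n, then |∏_{j=0}^{n}(z−α_j)/(z−β_j) − 1| ≤ exp(l/δ) − 1. -/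
open Filter Topology

lemma abs_prod_one_add_sub_one_le (s : Finset ℕ) (f : ℕ → ℂ) :
    ‖∏ i ∈ s, (1 + f i) - 1‖ ≤ ∏ i ∈ s, (1 + ‖f i‖) - 1 := by
  induction s using Finset.induction with
  | empty => simp
  | insert _ _ ha ih =>
    rename_i a s
    rw [Finset.prod_insert ha, Finset.prod_insert ha]
    have key : (1 + f a) * ∏ i ∈ s, (1 + f i) - 1
        = (1 + f a) * (∏ i ∈ s, (1 + f i) - 1) + f a := by ring
    rw [key]
    have h1 : ‖(1 + f a) * (∏ i ∈ s, (1 + f i) - 1) + f a‖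
        ≤ ‖1 + f a‖ * ‖∏ i ∈ s, (1 + f i) - 1‖
          + ‖f a‖ := by
      refine le_trans (norm_add_le _ _) ?_
      rw [norm_mul]
    refine h1.trans ?_
    have h2 : ‖1 + f a‖ ≤ 1 + ‖f a‖ := by
      simpa using norm_add_le 1 (f a)
    have h3 : (0:ℝ) ≤ ∏ i ∈ s, (1 + ‖f i‖) - 1 := by
      have : (1:ℝ) ≤ ∏ i ∈ s, (1 + ‖f i‖) := by
        calc (1:ℝ) = ∏ _i ∈ s, (1:ℝ) := by simp
          _ ≤ _ := Finset.prod_le_prod (fun _ _ => zero_le_one)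
            (fun i _ => by simpa using norm_nonneg (f i))
      linarith
    have := mul_le_mul h2 (ih) (norm_nonneg _) (by positivity)
    nlinarith [norm_nonneg (f a)]

/-- If `|z - β j| ≥ δ` for all `0 ≤ j ≤ n`, then
`|∏_{j=0}^{n} (z - α j)/(z - β j) - 1| ≤ exp(l/δ) - 1` where
`l = ∑_{j=0}^{n} (β j - α j)`. -/
theorem graphs_stmt4 (n : ℕ) (α β : ℕ → ℝ) (hab : ∀ j ≤ n, α j < β j)
    (δ : ℝ) (hδ : 0 < δ)
    (l : ℝ) (hl : l = ∑ j ∈ Finset.range (n + 1), (β j - α j))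
    (z : ℂ) (hz : ∀ j ≤ n, δ ≤ ‖z - (β j : ℂ)‖) :
    ‖(∏ j ∈ Finset.range (n + 1), (z - (α j : ℂ)) / (z - (β j : ℂ))) - 1‖
      ≤ Real.exp (l / δ) - 1 := by
  set f : ℕ → ℂ := fun j => ((β j : ℂ) - α j) / (z - β j) with hf
  have hne : ∀ j ≤ n, z - (β j : ℂ) ≠ 0 := fun j hj => by
    intro h
    have := hz j hj
    rw [h, norm_zero] at this
    linarith
  have hrw : ∏ j ∈ Finset.range (n + 1), (z - (α j : ℂ)) / (z - (β j : ℂ))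
      = ∏ j ∈ Finset.range (n + 1), (1 + f j) := by
    refine Finset.prod_congr rfl fun j hj => ?_
    have hj' := hne j (Nat.lt_succ_iff.mp (Finset.mem_range.mp hj))
    field_simp [hf]
    simp only [hf]
    field_simp
    ring
  rw [hrw]
  refine (abs_prod_one_add_sub_one_le _ _).trans ?_
  have hbound : ∀ j ∈ Finset.range (n + 1),
      1 + ‖f j‖ ≤ Real.exp ((β j - α j) / δ) := by
    intro j hj
    have hjn := Nat.lt_succ_iff.mp (Finset.mem_range.mp hj)
    have habs : ‖f j‖ ≤ (β j - α j) / δ := by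
      rw [hf, norm_div]
      have h1 : ‖(β j : ℂ) - α j‖ = β j - α j := by
        rw [← Complex.ofReal_sub, Complex.norm_real, Real.norm_eq_abs,
          abs_of_nonneg (by linarith [hab j hjn])]
      rw [h1]
      exact div_le_div_of_nonneg_left (by linarith [hab j hjn]) hδ (hz j hjn)
    refine le_trans ?_ (Real.exp_le_exp.mpr habs)
    linarith [Real.add_one_le_exp (‖f j‖)]
  have := Finset.prod_le_prod (fun j _ => by positivity) hbound
  have hld : l / δ = ∑ j ∈ Finset.range (n + 1), (β j - α j) / δ := by
    rw [hl, Finset.sum_div]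
  rw [hld, Real.exp_sum]
  linarith
end

section
/- For every compact set L ⊂ ℂ∖K, the n-th roots of the uniform deviations tend to zero: (sup_{z∈L}|g(z) − g_n(z)|)^{1/n} → 0 as n → ∞. -/
open Filter Topology

theorem graphs_aux_prod (s : Finset ℕ) (w : ℕ → ℂ) (e : ℕ → ℝ)
    (he : ∀ i ∈ s, 0 ≤ e i) (hw : ∀ i ∈ s, ‖w i - 1‖ ≤ e i) :
    ‖∏ i ∈ s, w i - 1‖ ≤ Real.exp (∑ i ∈ s, e i) - 1 := by
  induction s using Finset.induction with
  | empty => simp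
  | insert i s hi ih =>
    rw [Finset.prod_insert hi, Finset.sum_insert hi]
    have he' : ∀ j ∈ s, 0 ≤ e j := fun j hj => he j (Finset.mem_insert_of_mem hj)
    have hw' : ∀ j ∈ s, ‖w j - 1‖ ≤ e j := fun j hj => hw j (Finset.mem_insert_of_mem hj)
    have h1 := ih he' hw'
    have hei : 0 ≤ e i := he i (Finset.mem_insert_self i s)
    have hwi : ‖w i - 1‖ ≤ e i := hw i (Finset.mem_insert_self i s)
    have hwa : ‖w i‖ ≤ 1 + e i := by
      calc ‖w i‖ = ‖1 + (w i - 1)‖ := by ring_nf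
      _ ≤ ‖(1:ℂ)‖ + ‖w i - 1‖ := norm_add_le _ _
      _ ≤ 1 + e i := by simp; exact hwi
    have key : w i * ∏ j ∈ s, w j - 1 = w i * (∏ j ∈ s, w j - 1) + (w i - 1) := by ring
    rw [key]
    have h2 : ‖w i * (∏ j ∈ s, w j - 1) + (w i - 1)‖ ≤
        ‖w i‖ * ‖∏ j ∈ s, w j - 1‖ + e i := by
      calc _ ≤ ‖w i * (∏ j ∈ s, w j - 1)‖ + ‖w i - 1‖ :=
            norm_add_le _ _
      _ ≤ _ := by rw [norm_mul]; gcongr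
    have hE : (0:ℝ) < Real.exp (∑ j ∈ s, e j) := Real.exp_pos _
    have hEe : Real.exp (e i) * Real.exp (∑ j ∈ s, e j) = Real.exp (e i + ∑ j ∈ s, e j) :=
      (Real.exp_add _ _).symm
    have h3 : 1 + e i ≤ Real.exp (e i) := by linarith [Real.add_one_le_exp (e i)]
    have habs : (0:ℝ) ≤ ‖∏ j ∈ s, w j - 1‖ := norm_nonneg _
    nlinarith [mul_le_mul hwa h1 habs (by linarith : (0:ℝ) ≤ 1 + e i)]

theorem graphs_aux_exp (t : ℝ) : Real.exp t - 1 ≤ t * Real.exp t := by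
  have h1 : 1 - Real.exp (-t) ≤ t := by linarith [Real.add_one_le_exp (-t)]
  have h2 : Real.exp t * Real.exp (-t) = 1 := by rw [← Real.exp_add]; simp
  nlinarith [Real.exp_pos t]

/-- Under the additional smallness assumption `b k - a k < 4^{-k c k}`
with `c k → ∞`, for every compact `L ⊆ ℂ ∖ K` the `n`-th roots of the uniform
deviations `sup_{z ∈ L} |G z - g n z|` tend to `0`. -/
theorem graphs_stmt5 (a b : ℕ → ℝ) (hab0 : a 0 < b 0)
    (hj : ∀ j : ℕ, 1 ≤ j → a 0 < a j ∧ a j < b j ∧ b j < b 0)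
    (hdisj : ∀ i j : ℕ, 1 ≤ i → 1 ≤ j → i ≠ j →
      Disjoint (Set.Icc (a i) (b i)) (Set.Icc (a j) (b j)))
    (Kr : Set ℝ)
    (hKr : Kr = Set.Icc (a 0) (b 0) \ ⋃ j ∈ {j : ℕ | 1 ≤ j}, Set.Ioo (a j) (b j))
    (K : Set ℂ) (hK : K = (fun x : ℝ => (x : ℂ)) '' Kr)
    (g : ℕ → ℂ → ℂ)
    (hg : ∀ n z, g n z = ((z - (a 0 : ℂ)) / (z - (b 0 : ℂ))) *
      ∏ j ∈ Finset.Icc 1 n, (z - (b j : ℂ)) / (z - (a j : ℂ)))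
    (G : ℂ → ℂ) (hGd : DifferentiableOn ℂ G Kᶜ)
    (hGlim : ∀ L : Set ℂ, L ⊆ Kᶜ → IsCompact L →
      TendstoUniformlyOn (fun n z => g n z) G atTop L)
    (c : ℕ → ℝ) (hc_pos : ∀ k : ℕ, 1 ≤ k → 0 < c k)
    (hc_top : Tendsto c atTop atTop)
    (hd : ∀ k : ℕ, 1 ≤ k → b k - a k < (4 : ℝ) ^ (-(k : ℝ) * c k)) :
    ∀ L : Set ℂ, L ⊆ Kᶜ → IsCompact L →
      Tendsto (fun n : ℕ =>
          (⨆ z : L, ‖G z - g n z‖) ^ (1 / (n : ℝ)))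
        atTop (𝓝 0) := by
  intro L hL hLc
  rcases L.eq_empty_or_nonempty with hLe | hLne
  · subst hLe
    have hev : ∀ᶠ n : ℕ in atTop,
        (0:ℝ) = (⨆ z : (∅:Set ℂ), ‖G z - g n z‖) ^ (1/(n:ℝ)) := by
      filter_upwards [eventually_ge_atTop 1] with n hn
      rw [Real.iSup_of_isEmpty, Real.zero_rpow]
      exact one_div_ne_zero (Nat.cast_ne_zero.mpr (by omega))
    exact Tendsto.congr' hev tendsto_const_nhds
  -- Basic facts about K
  have hKrcl : IsClosed Kr := by
    rw [hKr]
    exact isClosed_Icc.sdiff (isOpen_biUnion fun j _ => isOpen_Ioo)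
  have hKcpt : IsCompact K := by
    rw [hK]
    exact ((isCompact_Icc.of_isClosed_subset hKrcl
      (by rw [hKr]; exact Set.diff_subset)).image Complex.continuous_ofReal)
  have hmemK : ∀ x : ℝ, x ∈ Set.Icc (a 0) (b 0) →
      (∀ j : ℕ, 1 ≤ j → x ∉ Set.Ioo (a j) (b j)) → (x:ℂ) ∈ K := by
    intro x hx h
    rw [hK, hKr]
    refine ⟨x, ⟨hx, ?_⟩, rfl⟩
    simp only [Set.mem_iUnion, Set.mem_setOf_eq, not_exists]
    intro j hjm
    exact h j hjm
  have ha0K : ((a 0 : ℝ):ℂ) ∈ K :=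
    hmemK _ ⟨le_refl _, hab0.le⟩ (fun j hjm hm => absurd hm.1 (not_lt.mpr (hj j hjm).1.le))
  have hb0K : ((b 0 : ℝ):ℂ) ∈ K :=
    hmemK _ ⟨hab0.le, le_refl _⟩ (fun j hjm hm => absurd hm.2 (not_lt.mpr (hj j hjm).2.2.le))
  have hajK : ∀ j : ℕ, 1 ≤ j → ((a j : ℝ):ℂ) ∈ K := by
    intro j hjm
    refine hmemK _ ⟨(hj j hjm).1.le, ((hj j hjm).2.1.trans (hj j hjm).2.2).le⟩ ?_
    intro i him hm
    rcases eq_or_ne i j with rfl | hne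
    · exact absurd hm.1 (lt_irrefl _)
    · exact Set.disjoint_left.mp (hdisj i j him hjm hne)
        ⟨hm.1.le, hm.2.le⟩ ⟨le_refl _, (hj j hjm).2.1.le⟩
  -- distance from L to K
  obtain ⟨z0, hz0L, hz0m'⟩ := hLc.exists_isMinOn hLne (Metric.continuous_infDist_pt K).continuousOn
  have hz0m := isMinOn_iff.mp hz0m'
  set δ : ℝ := Metric.infDist z0 K with hδdef
  have hδ : 0 < δ := by
    have hz0K : z0 ∉ K := hL hz0L
    exact (hKcpt.isClosed.notMem_iff_infDist_pos ⟨_, ha0K⟩).mp hz0K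
  have hdist : ∀ z ∈ L, ∀ w ∈ K, δ ≤ dist z w := fun z hz w hw =>
    (hz0m z hz).trans (Metric.infDist_le_dist_of_mem hw)
  -- max of the prefactor on L
  have hneb0 : ∀ z ∈ L, z - ((b 0:ℝ):ℂ) ≠ 0 := by
    intro z hz h
    have h1 := hdist z hz _ hb0K
    rw [Complex.dist_eq, h] at h1
    simp at h1
    linarith
  obtain ⟨z1, hz1L, hC0'⟩ := hLc.exists_isMaxOn hLne
    (continuous_norm.comp_continuousOn
      ((continuous_id.sub continuous_const).continuousOn.div
        (continuous_id.sub continuous_const).continuousOn hneb0))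
  have hC0 := isMaxOn_iff.mp hC0'
  set C0 : ℝ := ‖(z1 - ((a 0:ℝ):ℂ)) / (z1 - ((b 0:ℝ):ℂ))‖ with hC0def
  set C1 : ℝ := max C0 1 with hC1def
  have hC1pos : (0:ℝ) < C1 := lt_of_lt_of_le one_pos (le_max_right _ _)
  have hpref : ∀ z ∈ L, ‖(z - ((a 0:ℝ):ℂ)) / (z - ((b 0:ℝ):ℂ))‖ ≤ C1 :=
    fun z hz => (hC0 z hz).trans (le_max_left _ _)
  -- the deviations e j
  set D : ℕ → ℝ := fun j => (4:ℝ)^(-(j:ℝ) * c j) with hDdef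
  have hD0 : ∀ j, 0 < D j := fun j => Real.rpow_pos_of_pos (by norm_num) _
  set e : ℕ → ℝ := fun j => D j / δ with hedef
  have he0 : ∀ j, 0 ≤ e j := fun j => div_nonneg (hD0 j).le hδ.le
  have hu : ∀ z ∈ L, ∀ j : ℕ, 1 ≤ j →
      ‖(z - ((b j:ℝ):ℂ))/(z - ((a j:ℝ):ℂ)) - 1‖ ≤ e j := by
    intro z hz j hjm
    have hza : δ ≤ ‖z - ((a j:ℝ):ℂ)‖ := by
      have := hdist z hz _ (hajK j hjm)
      rwa [Complex.dist_eq] at this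
    have hne : z - ((a j:ℝ):ℂ) ≠ 0 := by
      intro h; rw [h] at hza; simp at hza; linarith
    have hid : (z - ((b j:ℝ):ℂ))/(z - ((a j:ℝ):ℂ)) - 1 =
        (((a j:ℝ):ℂ) - ((b j:ℝ):ℂ))/(z - ((a j:ℝ):ℂ)) := by
      field_simp
      ring
    rw [hid, norm_div]
    have hnum : ‖((a j:ℝ):ℂ) - ((b j:ℝ):ℂ)‖ = b j - a j := by
      rw [← Complex.ofReal_sub, Complex.norm_real, Real.norm_eq_abs,
        abs_of_nonpos (by linarith [(hj j hjm).2.1])]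
      ring
    rw [hnum]
    exact div_le_div₀ (hD0 j).le (hd j hjm).le hδ hza
  -- uniform bound on partial sums of e
  obtain ⟨N0, hN0⟩ := eventually_atTop.mp (hc_top.eventually_ge_atTop (1:ℝ))
  set M : ℕ → ℝ := fun j => if j ≤ N0 then 1 else (1/4:ℝ)^j with hMdef
  have hM0 : ∀ j, 0 ≤ M j := by
    intro j; rw [hMdef]; dsimp only; split_ifs <;> positivity
  have hMsum : Summable M := by
    have hMeq : M = fun j => (if j ≤ N0 then 1 - (1/4:ℝ)^j else 0) + (1/4:ℝ)^j := by
      funext j; rw [hMdef]; dsimp only; split_ifs <;> ring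
    rw [hMeq]
    exact Summable.add
      (summable_of_ne_finset_zero (s := Finset.range (N0+1))
        (fun j hj => by
          rw [if_neg]
          simp only [Finset.mem_range] at hj
          omega))
      (summable_geometric_of_lt_one (by norm_num) (by norm_num))
  have hpowid : ∀ j : ℕ, (4:ℝ)^(-(j:ℝ)) = (1/4:ℝ)^j := by
    intro j
    rw [Real.rpow_neg (by norm_num), Real.rpow_natCast, ← inv_pow]
    norm_num
  have hDM : ∀ j : ℕ, 1 ≤ j → D j ≤ M j := by
    intro j hjm
    rw [hMdef]; dsimp only
    split_ifs with h
    · exact Real.rpow_le_one_of_one_le_of_nonpos (by norm_num)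
        (by nlinarith [hc_pos j hjm, (Nat.one_le_cast (α := ℝ)).mpr hjm])
    · have hc1 : (1:ℝ) ≤ c j := hN0 j (by omega)
      calc D j ≤ (4:ℝ)^(-(j:ℝ)) := Real.rpow_le_rpow_of_exponent_le (by norm_num)
            (by nlinarith [Nat.cast_nonneg (α := ℝ) j])
      _ = (1/4:ℝ)^j := hpowid j
  set T : ℝ := ∑' j, M j with hTdef
  have hTs : ∀ s : Finset ℕ, (∀ j ∈ s, 1 ≤ j) → ∑ j ∈ s, e j ≤ T/δ := by
    intro s hs
    have h1 : ∑ j ∈ s, e j = (∑ j ∈ s, D j)/δ := by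
      rw [hedef]; dsimp only; rw [Finset.sum_div]
    rw [h1]
    apply (div_le_div_iff_of_pos_right hδ).mpr
    calc ∑ j ∈ s, D j ≤ ∑ j ∈ s, M j := Finset.sum_le_sum (fun j hjs => hDM j (hs j hjs))
    _ ≤ T := Summable.sum_le_tsum s (fun j _ => hM0 j) hMsum
  -- uniform bound on |g n z|
  set B : ℝ := C1 * Real.exp (T/δ) with hBdef
  have hBpos : 0 < B := mul_pos hC1pos (Real.exp_pos _)
  have hprodbound : ∀ s : Finset ℕ, (∀ j ∈ s, 1 ≤ j) → ∀ z ∈ L,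
      ‖∏ j ∈ s, ((z - ((b j:ℝ):ℂ))/(z - ((a j:ℝ):ℂ)))‖ ≤ Real.exp (T/δ) := by
    intro s hs z hz
    rw [norm_prod]
    calc ∏ j ∈ s, ‖(z - ((b j:ℝ):ℂ))/(z - ((a j:ℝ):ℂ))‖
        ≤ ∏ j ∈ s, Real.exp (e j) := by
          apply Finset.prod_le_prod (fun j _ => norm_nonneg _)
          intro j hjs
          have h1 : ‖(z - ((b j:ℝ):ℂ))/(z - ((a j:ℝ):ℂ))‖ ≤ 1 + e j := by
            calc ‖(z - ((b j:ℝ):ℂ))/(z - ((a j:ℝ):ℂ))‖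
                = ‖1 + ((z - ((b j:ℝ):ℂ))/(z - ((a j:ℝ):ℂ)) - 1)‖ := by ring_nf
            _ ≤ ‖(1:ℂ)‖ + ‖(z - ((b j:ℝ):ℂ))/(z - ((a j:ℝ):ℂ)) - 1‖ :=
                norm_add_le _ _
            _ ≤ 1 + e j := by
                simp only [norm_one]
                exact add_le_add_right (hu z hz j (hs j hjs)) 1
          exact h1.trans (by linarith [Real.add_one_le_exp (e j)])
    _ = Real.exp (∑ j ∈ s, e j) := (Real.exp_sum _ _).symm
    _ ≤ Real.exp (T/δ) := Real.exp_le_exp.mpr (hTs s hs)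
  have hgbound : ∀ n : ℕ, ∀ z ∈ L, ‖g n z‖ ≤ B := by
    intro n z hz
    rw [hg, norm_mul, hBdef]
    exact mul_le_mul (hpref z hz)
      (hprodbound _ (fun j hjs => (Finset.mem_Icc.mp hjs).1) z hz)
      (norm_nonneg _) hC1pos.le
  -- product splitting
  have hsplit : ∀ n m : ℕ, n ≤ m → ∀ z : ℂ, g m z =
      g n z * ∏ j ∈ Finset.Ioc n m, ((z - ((b j:ℝ):ℂ))/(z - ((a j:ℝ):ℂ))) := by
    intro n m hnm z
    rw [hg, hg, show Finset.Icc 1 m = Finset.Ioc 0 m from Finset.Icc_add_one_left_eq_Ioc 0 m,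
      show Finset.Icc 1 n = Finset.Ioc 0 n from Finset.Icc_add_one_left_eq_Ioc 0 n,
      ← Finset.prod_Ioc_consecutive _ (Nat.zero_le n) hnm]
    ring
  -- nonnegativity of the sup
  have hsupnn : ∀ n : ℕ, 0 ≤ ⨆ z : L, ‖G z - g n z‖ :=
    fun n => Real.iSup_nonneg (fun z => norm_nonneg _)
  have hNe : Nonempty ↥L := hLne.to_subtype
  rw [Metric.tendsto_atTop]
  intro ε hε
  obtain ⟨p0, hp0⟩ := exists_pow_lt_of_lt_one (half_pos hε) (by norm_num : (1/4:ℝ) < 1)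
  set p : ℕ := p0 + 1 with hpdef
  set r : ℝ := (1/4:ℝ)^p with hrdef
  have hr0 : 0 < r := by positivity
  have hr14 : r ≤ 1/4 := by
    rw [hrdef]
    calc ((1:ℝ)/4)^p ≤ (1/4:ℝ)^1 := pow_le_pow_of_le_one (by norm_num) (by norm_num) (by omega)
    _ = 1/4 := pow_one _
  have hr1 : r < 1 := lt_of_le_of_lt hr14 (by norm_num)
  have hrε : 2 * r < ε := by
    have h : r ≤ (1/4:ℝ)^p0 := by
      rw [hrdef, hpdef]
      exact pow_le_pow_of_le_one (by norm_num) (by norm_num) (by omega)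
    linarith
  obtain ⟨N1, hN1⟩ := eventually_atTop.mp (hc_top.eventually_ge_atTop (p:ℝ))
  obtain ⟨N2, hN2⟩ := eventually_atTop.mp
    ((tendsto_pow_atTop_nhds_zero_of_lt_one hr0.le hr1).eventually (eventually_le_nhds hδ))
  set A : ℝ := B * Real.exp 1 / δ with hAdef
  have hApos : 0 < A := by positivity
  obtain ⟨N3, hN3⟩ := eventually_atTop.mp
    ((tendsto_pow_atTop_atTop_of_one_lt (by norm_num : (1:ℝ) < 2)).eventually_ge_atTop A)
  refine ⟨max (max N1 N2) (max N3 1), fun n hn => ?_⟩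
  have hnN1 : N1 ≤ n := le_trans ((le_max_left _ _).trans (le_max_left _ _)) hn
  have hnN2 : N2 ≤ n := le_trans ((le_max_right _ _).trans (le_max_left _ _)) hn
  have hnN3 : N3 ≤ n := le_trans ((le_max_left _ _).trans (le_max_right _ _)) hn
  have hn1 : 1 ≤ n := le_trans ((le_max_right _ _).trans (le_max_right _ _)) hn
  have hn0 : (n:ℝ) ≠ 0 := Nat.cast_ne_zero.mpr (by omega)
  have hrnδ : r^n ≤ δ := hN2 n hnN2
  -- tail bound
  have htail : ∀ m : ℕ, n ≤ m → ∑ j ∈ Finset.Ioc n m, e j ≤ r^n/δ := by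
    intro m hm
    have h1 : ∑ j ∈ Finset.Ioc n m, e j = (∑ j ∈ Finset.Ioc n m, D j)/δ := by
      rw [hedef]; dsimp only; rw [Finset.sum_div]
    rw [h1]
    apply (div_le_div_iff_of_pos_right hδ).mpr
    have h2 : ∀ j ∈ Finset.Ioc n m, D j ≤ r^j := by
      intro j hjs
      obtain ⟨hj1, hj2⟩ := Finset.mem_Ioc.mp hjs
      have hcj : (p:ℝ) ≤ c j := hN1 j (by omega)
      have hjR : (1:ℝ) ≤ (j:ℝ) := Nat.one_le_cast.mpr (by omega)
      have hpR : (0:ℝ) ≤ (p:ℝ) := Nat.cast_nonneg _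
      calc D j ≤ (4:ℝ)^(-((j*p : ℕ):ℝ)) := by
            apply Real.rpow_le_rpow_of_exponent_le (by norm_num)
            push_cast at hcj ⊢
            nlinarith [mul_le_mul_of_nonneg_left hcj (by positivity : (0:ℝ) ≤ (j:ℝ))]
      _ = (1/4:ℝ)^(j*p) := hpowid (j*p)
      _ = r^j := by rw [hrdef, mul_comm, pow_mul]
    calc ∑ j ∈ Finset.Ioc n m, D j ≤ ∑ j ∈ Finset.Ioc n m, r^j := Finset.sum_le_sum h2
    _ = (r^(m+1) - r^(n+1))/(r - 1) := by
        rw [← Finset.Ico_add_one_add_one_eq_Ioc, geom_sum_Ico (ne_of_lt hr1) (by omega)]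
    _ = (r^(n+1) - r^(m+1))/(1 - r) := by
        rw [div_eq_div_iff (by linarith) (by linarith)]; ring
    _ ≤ r^n := by
        rw [div_le_iff₀ (by linarith : (0:ℝ) < 1 - r)]
        nlinarith [pow_nonneg hr0.le n, pow_nonneg hr0.le (m+1),
          mul_nonneg (sub_nonneg.mpr hr14) (pow_nonneg hr0.le n), pow_succ r n]
  -- per-point estimate
  have hest : ∀ z ∈ L, ‖G z - g n z‖ ≤ A * r^n := by
    intro z hz
    have hmb : ∀ m : ℕ, n ≤ m → ‖g m z - g n z‖ ≤ A * r^n := by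
      intro m hm
      rw [hsplit n m hm z]
      have hid : g n z * (∏ j ∈ Finset.Ioc n m, ((z - ((b j:ℝ):ℂ))/(z - ((a j:ℝ):ℂ)))) - g n z
          = g n z * ((∏ j ∈ Finset.Ioc n m, ((z - ((b j:ℝ):ℂ))/(z - ((a j:ℝ):ℂ)))) - 1) := by
        ring
      rw [hid, norm_mul]
      have hS1 : ∑ j ∈ Finset.Ioc n m, e j ≤ r^n/δ := htail m hm
      have hSle1 : ∑ j ∈ Finset.Ioc n m, e j ≤ 1 :=
        hS1.trans (by rw [div_le_one hδ]; exact hrnδ)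
      have hS0 : 0 ≤ ∑ j ∈ Finset.Ioc n m, e j := Finset.sum_nonneg fun j _ => he0 j
      have h2 : ‖(∏ j ∈ Finset.Ioc n m, ((z - ((b j:ℝ):ℂ))/(z - ((a j:ℝ):ℂ)))) - 1‖
          ≤ Real.exp (∑ j ∈ Finset.Ioc n m, e j) - 1 :=
        graphs_aux_prod _ _ _ (fun j _ => he0 j)
          (fun j hjs => hu z hz j (by have := (Finset.mem_Ioc.mp hjs).1; omega))
      calc ‖g n z‖ *
            ‖(∏ j ∈ Finset.Ioc n m, ((z - ((b j:ℝ):ℂ))/(z - ((a j:ℝ):ℂ)))) - 1‖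
          ≤ B * (Real.exp (∑ j ∈ Finset.Ioc n m, e j) - 1) :=
            mul_le_mul (hgbound n z hz) h2 (norm_nonneg _) hBpos.le
      _ ≤ B * ((∑ j ∈ Finset.Ioc n m, e j) * Real.exp (∑ j ∈ Finset.Ioc n m, e j)) :=
            mul_le_mul_of_nonneg_left (graphs_aux_exp _) hBpos.le
      _ ≤ B * ((r^n/δ) * Real.exp 1) := by
            apply mul_le_mul_of_nonneg_left ?_ hBpos.le
            exact mul_le_mul hS1 (Real.exp_le_exp.mpr hSle1) (Real.exp_pos _).le (by positivity)
      _ = A * r^n := by rw [hAdef]; ring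
    have hz_in : ({z} : Set ℂ) ⊆ Kᶜ := Set.singleton_subset_iff.mpr (hL hz)
    have hten : Tendsto (fun m => g m z) atTop (𝓝 (G z)) :=
      (hGlim {z} hz_in isCompact_singleton).tendsto_at rfl
    have habs : Tendsto (fun m => ‖g m z - g n z‖) atTop
        (𝓝 (‖G z - g n z‖)) :=
      (continuous_norm.tendsto _).comp (hten.sub_const _)
    exact le_of_tendsto habs (eventually_atTop.mpr ⟨n, hmb⟩)
  have hsup : (⨆ z : L, ‖G z - g n z‖) ≤ A * r^n :=
    ciSup_le (fun z => hest z z.2)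
  have hfn : (⨆ z : L, ‖G z - g n z‖) ^ (1/(n:ℝ)) ≤ 2 * r := by
    calc (⨆ z : L, ‖G z - g n z‖) ^ (1/(n:ℝ)) ≤ (A * r^n) ^ (1/(n:ℝ)) :=
        Real.rpow_le_rpow (hsupnn n) hsup (by positivity)
    _ = A^(1/(n:ℝ)) * (r^n)^(1/(n:ℝ)) := Real.mul_rpow hApos.le (by positivity)
    _ ≤ 2 * r := by
        have h1 : ((r^n : ℝ))^(1/(n:ℝ)) = r := by
          rw [← Real.rpow_natCast r n, ← Real.rpow_mul hr0.le, mul_one_div,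
            div_self hn0, Real.rpow_one]
        rw [h1]
        apply mul_le_mul_of_nonneg_right ?_ hr0.le
        calc A^(1/(n:ℝ)) ≤ ((2:ℝ)^n)^(1/(n:ℝ)) :=
            Real.rpow_le_rpow hApos.le (hN3 n hnN3) (by positivity)
        _ = 2 := by
            rw [← Real.rpow_natCast 2 n, ← Real.rpow_mul (by norm_num), mul_one_div,
              div_self hn0, Real.rpow_one]
  rw [Real.dist_eq, sub_zero, abs_of_nonneg (Real.rpow_nonneg (hsupnn n) _)]
  linarith
end

section
/- Suppose h is not identically zero and h(z₀, w) = 0 for every w ∈ ℂ. Then there exist an integer m ≥ 1 and an entire function h₁ : ℂ² → ℂ such that h(z,w) = (z − z₀)^m · h₁(z,w) for all (z,w) ∈ ℂ², and h₁(z₀, ·) is not identically zero, i.e. there exists w ∈ ℂ with h₁(z₀, w) ≠ 0. -/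
set_option maxHeartbeats 1000000

open Filter Topology Set MeasureTheory Metric Complex

namespace GraphsStmt6Aux

noncomputable def d2 (u : ℂ × ℂ → ℂ) (ζ w : ℂ) : ℂ := deriv (fun w' => u (ζ, w')) w

lemma diff_fib2 {u : ℂ × ℂ → ℂ} (hu : Differentiable ℂ u) (ζ : ℂ) :
    Differentiable ℂ fun w => u (ζ, w) :=
  hu.comp ((differentiable_const ζ).prodMk differentiable_id)

lemma diff_fib1 {u : ℂ × ℂ → ℂ} (hu : Differentiable ℂ u) (w : ℂ) :
    Differentiable ℂ fun z => u (z, w) :=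
  hu.comp (differentiable_id.prodMk (differentiable_const w))

lemma cmne (θ : ℝ) : circleMap 0 1 θ ≠ 0 := circleMap_ne_center one_ne_zero

lemma d2_cont {u : ℂ × ℂ → ℂ} (hu : Differentiable ℂ u) (b : ℂ) :
    Continuous fun ζ => d2 u ζ b := by
  have key : ∀ ζ : ℂ, d2 u ζ b = (2 * Real.pi * I : ℂ)⁻¹ •
      ∫ θ in (0:ℝ)..2 * Real.pi, deriv (circleMap b 1) θ •
        (((circleMap b 1 θ - b) ^ 2)⁻¹ • u (ζ, circleMap b 1 θ)) := by
    intro ζ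
    have := Complex.two_pi_I_inv_smul_circleIntegral_sub_sq_inv_smul_of_differentiable
      isOpen_univ (subset_univ (closedBall b 1)) ((diff_fib2 hu ζ).differentiableOn)
      (mem_ball_self one_pos)
    rw [d2, ← this]
    rfl
  simp only [key, deriv_circleMap]
  refine Continuous.fun_const_smul ?_ _
  apply intervalIntegral.continuous_parametric_intervalIntegral_of_continuous'
  show Continuous fun p : ℂ × ℝ => (circleMap 0 1 p.2 * I) •
      (((circleMap b 1 p.2 - b) ^ 2)⁻¹ • u (p.1, circleMap b 1 p.2))
  apply Continuous.fun_smul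
  · exact ((continuous_circleMap 0 1).comp continuous_snd).mul continuous_const
  refine Continuous.fun_smul ?_ ?_
  · refine Continuous.inv₀ ?_ ?_
    · exact (((continuous_circleMap b 1).comp continuous_snd).sub continuous_const).pow 2
    · intro p
      rw [circleMap_sub_center]
      exact pow_ne_zero _ (cmne p.2)
  · exact hu.continuous.comp (continuous_fst.prodMk ((continuous_circleMap b 1).comp continuous_snd))

noncomputable def Kf (θ : ℝ) : ℂ := circleMap 0 1 θ * I * (circleMap 0 1 θ)⁻¹

lemma Kf_eq (θ : ℝ) : Kf θ = I := by
  rw [Kf, mul_comm (circleMap 0 1 θ) I, mul_assoc, mul_inv_cancel₀ (cmne θ), mul_one]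

noncomputable def Ff (z₀ : ℂ) (u : ℂ × ℂ → ℂ) (x : ℂ × ℂ) (θ : ℝ) : ℂ :=
  Kf θ * ((circleMap z₀ 1 θ - x.1)⁻¹ * u (circleMap z₀ 1 θ, x.2))

noncomputable def Ff' (z₀ : ℂ) (u : ℂ × ℂ → ℂ) (x : ℂ × ℂ) (θ : ℝ) : ℂ × ℂ →L[ℂ] ℂ :=
  (Kf θ * (u (circleMap z₀ 1 θ, x.2) * ((circleMap z₀ 1 θ - x.1) ^ 2)⁻¹)) •
      ContinuousLinearMap.fst ℂ ℂ ℂ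
    + (Kf θ * ((circleMap z₀ 1 θ - x.1)⁻¹ * d2 u (circleMap z₀ 1 θ) x.2)) •
      ContinuousLinearMap.snd ℂ ℂ ℂ

lemma hasFDerivAt_Ff (z₀ : ℂ) {u : ℂ × ℂ → ℂ} (hu : Differentiable ℂ u) (θ : ℝ) (x : ℂ × ℂ)
    (hq : circleMap z₀ 1 θ - x.1 ≠ 0) :
    HasFDerivAt (fun y => Ff z₀ u y θ) (Ff' z₀ u x θ) x := by
  have h1 : HasDerivAt (fun y : ℂ => circleMap z₀ 1 θ - y) (-1) x.1 :=
    (hasDerivAt_id x.1).const_sub _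
  have hA : HasFDerivAt (fun y : ℂ × ℂ => (circleMap z₀ 1 θ - y.1)⁻¹)
      ((-(-1) / (circleMap z₀ 1 θ - x.1) ^ 2) • ContinuousLinearMap.fst ℂ ℂ ℂ) x :=
    (h1.inv hq).comp_hasFDerivAt x hasFDerivAt_fst
  have hB : HasFDerivAt (fun y : ℂ × ℂ => u (circleMap z₀ 1 θ, y.2))
      (d2 u (circleMap z₀ 1 θ) x.2 • ContinuousLinearMap.snd ℂ ℂ ℂ) x :=
    ((diff_fib2 hu (circleMap z₀ 1 θ)) x.2).hasDerivAt.comp_hasFDerivAt x hasFDerivAt_snd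
  refine ((hA.mul hB).const_mul (Kf θ)).congr_fderiv ?_
  refine ContinuousLinearMap.ext fun v => ?_
  simp only [Ff', ContinuousLinearMap.add_apply, ContinuousLinearMap.smul_apply,
    ContinuousLinearMap.coe_fst', ContinuousLinearMap.coe_snd', smul_eq_mul]
  ring

lemma diffAt_center (z₀ b : ℂ) {u : ℂ × ℂ → ℂ} (hu : Differentiable ℂ u)
    (h0 : ∀ w, u (z₀, w) = 0) :
    DifferentiableAt ℂ (fun x : ℂ × ℂ => dslope (fun z => u (z, x.2)) z₀ x.1) (z₀, b) := by
  obtain ⟨C, hC⟩ : ∃ C, ∀ p ∈ closedBall ((z₀, b) : ℂ × ℂ) 3, ‖u p‖ ≤ C :=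
    (isCompact_closedBall _ _).exists_bound_of_continuousOn hu.continuous.continuousOn
  have hC0 : 0 ≤ C := le_trans (norm_nonneg _) (hC (z₀, b) (mem_closedBall_self (by norm_num)))
  have hcm : ∀ θ : ℝ, ‖circleMap z₀ 1 θ - z₀‖ = 1 := by
    intro θ
    rw [circleMap_sub_center, norm_circleMap_zero]
    norm_num
  have hfst : ∀ x : ℂ × ℂ, x ∈ ball ((z₀, b) : ℂ × ℂ) (1/2) → ‖x.1 - z₀‖ < 1/2 := by
    intro x hx
    have h1 : dist x.1 z₀ ≤ dist x (z₀, b) := by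
      rw [Prod.dist_eq]; exact le_max_left _ _
    rw [← dist_eq_norm]
    exact lt_of_le_of_lt h1 (mem_ball.mp hx)
  have hsnd : ∀ x : ℂ × ℂ, x ∈ ball ((z₀, b) : ℂ × ℂ) (1/2) → dist x.2 b < 1/2 := by
    intro x hx
    have h1 : dist x.2 b ≤ dist x (z₀, b) := by
      rw [Prod.dist_eq]; exact le_max_right _ _
    exact lt_of_le_of_lt h1 (mem_ball.mp hx)
  have hqlow : ∀ (θ : ℝ) (x : ℂ × ℂ), x ∈ ball ((z₀, b) : ℂ × ℂ) (1/2) →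
      (1:ℝ)/2 ≤ ‖circleMap z₀ 1 θ - x.1‖ := by
    intro θ x hx
    have h1 : ‖circleMap z₀ 1 θ - z₀‖ - ‖x.1 - z₀‖ ≤ ‖circleMap z₀ 1 θ - x.1‖ := by
      have h := norm_sub_norm_le (circleMap z₀ 1 θ - z₀) (x.1 - z₀)
      rwa [sub_sub_sub_cancel_right] at h
    have h2 := hfst x hx
    rw [hcm θ] at h1
    linarith
  have hqne : ∀ (θ : ℝ) (x : ℂ × ℂ), x ∈ ball ((z₀, b) : ℂ × ℂ) (1/2) →
      circleMap z₀ 1 θ - x.1 ≠ 0 := by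
    intro θ x hx h
    have := hqlow θ x hx
    rw [h, norm_zero] at this
    linarith
  have hd2 : ∀ (θ : ℝ) (x : ℂ × ℂ), x ∈ ball ((z₀, b) : ℂ × ℂ) (1/2) →
      ‖d2 u (circleMap z₀ 1 θ) x.2‖ ≤ C := by
    intro θ x hx
    have hb : ∀ ω ∈ sphere x.2 1, ‖u (circleMap z₀ 1 θ, ω)‖ ≤ C := by
      intro ω hω
      apply hC
      rw [mem_closedBall, Prod.dist_eq]
      have h1 : dist (circleMap z₀ 1 θ) z₀ = 1 := by rw [dist_eq_norm]; exact hcm θ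
      have h2 : dist ω b ≤ dist ω x.2 + dist x.2 b := dist_triangle _ _ _
      have h3 : dist ω x.2 = 1 := mem_sphere.mp hω
      have h4 := hsnd x hx
      have : dist ω b ≤ 3 := by rw [h3] at h2; linarith
      exact max_le (by rw [h1]; norm_num) this
    have := Complex.norm_deriv_le_of_forall_mem_sphere_norm_le one_pos
      (diff_fib2 hu (circleMap z₀ 1 θ)).diffContOnCl hb
    simpa [d2] using this
  have hbound : ∀ (θ : ℝ) (x : ℂ × ℂ), x ∈ ball ((z₀, b) : ℂ × ℂ) (1/2) →
      ‖Ff' z₀ u x θ‖ ≤ 6 * C := by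
    intro θ x hx
    have hq := hqlow θ x hx
    have hq0 : (0:ℝ) < ‖circleMap z₀ 1 θ - x.1‖ := lt_of_lt_of_le (by norm_num) hq
    have hinv : ‖(circleMap z₀ 1 θ - x.1)⁻¹‖ ≤ 2 := by
      rw [norm_inv]
      calc ‖circleMap z₀ 1 θ - x.1‖⁻¹ ≤ ((1:ℝ)/2)⁻¹ := by
            exact inv_anti₀ (by norm_num) hq
        _ = 2 := by norm_num
    have hinv2 : ‖((circleMap z₀ 1 θ - x.1) ^ 2)⁻¹‖ ≤ 4 := by
      rw [norm_inv, norm_pow]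
      calc (‖circleMap z₀ 1 θ - x.1‖ ^ 2)⁻¹ ≤ (((1:ℝ)/2) ^ 2)⁻¹ := by
            apply inv_anti₀ (by norm_num)
            exact pow_le_pow_left₀ (by norm_num) hq 2
        _ = 4 := by norm_num
    have hu1 : ‖u (circleMap z₀ 1 θ, x.2)‖ ≤ C := by
      apply hC
      rw [mem_closedBall, Prod.dist_eq]
      have h1 : dist (circleMap z₀ 1 θ) z₀ = 1 := by rw [dist_eq_norm]; exact hcm θ
      have h4 := hsnd x hx
      exact max_le (by rw [h1]; norm_num) (by rw [dist_comm] at h4 ⊢; linarith)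
    have hKn : ‖Kf θ‖ = 1 := by rw [Kf_eq]; simp
    have hs1 : ‖Kf θ * (u (circleMap z₀ 1 θ, x.2) * ((circleMap z₀ 1 θ - x.1) ^ 2)⁻¹)‖ ≤ 4 * C := by
      rw [norm_mul, hKn, one_mul, norm_mul]
      calc ‖u (circleMap z₀ 1 θ, x.2)‖ * ‖((circleMap z₀ 1 θ - x.1) ^ 2)⁻¹‖
          ≤ C * 4 := mul_le_mul hu1 hinv2 (norm_nonneg _) hC0
        _ = 4 * C := by ring
    have hs2 : ‖Kf θ * ((circleMap z₀ 1 θ - x.1)⁻¹ * d2 u (circleMap z₀ 1 θ) x.2)‖ ≤ 2 * C := by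
      rw [norm_mul, hKn, one_mul, norm_mul]
      exact mul_le_mul hinv (hd2 θ x hx) (norm_nonneg _) (by norm_num)
    calc ‖Ff' z₀ u x θ‖ ≤
        ‖(Kf θ * (u (circleMap z₀ 1 θ, x.2) * ((circleMap z₀ 1 θ - x.1) ^ 2)⁻¹)) •
            ContinuousLinearMap.fst ℂ ℂ ℂ‖
          + ‖(Kf θ * ((circleMap z₀ 1 θ - x.1)⁻¹ * d2 u (circleMap z₀ 1 θ) x.2)) •
            ContinuousLinearMap.snd ℂ ℂ ℂ‖ := norm_add_le _ _
      _ ≤ 4 * C * 1 + 2 * C * 1 := by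
          apply add_le_add
          · exact le_trans (ContinuousLinearMap.opNorm_smul_le _ _)
              (mul_le_mul hs1 (ContinuousLinearMap.norm_fst_le ℂ ℂ ℂ) (norm_nonneg _) (by linarith))
          · exact le_trans (ContinuousLinearMap.opNorm_smul_le _ _)
              (mul_le_mul hs2 (ContinuousLinearMap.norm_snd_le ℂ ℂ ℂ) (norm_nonneg _) (by linarith))
      _ = 6 * C := by ring
  -- differentiation under the integral sign
  have hKcont : Continuous Kf := by
    have : Continuous fun θ : ℝ => (I : ℂ) := continuous_const
    simp only [funext Kf_eq]
    exact this
  have hmain := intervalIntegral.hasFDerivAt_integral_of_dominated_of_fderiv_le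
    (𝕜 := ℂ) (μ := volume) (a := 0) (b := 2 * Real.pi)
    (F := fun x θ => Ff z₀ u x θ) (F' := fun x θ => Ff' z₀ u x θ)
    (x₀ := ((z₀, b) : ℂ × ℂ)) (bound := fun _ => 6 * C) (s := ball ((z₀, b) : ℂ × ℂ) (1/2))
    (ball_mem_nhds _ (by norm_num))
    (by
      apply Filter.Eventually.of_forall
      intro x
      apply Measurable.aestronglyMeasurable
      apply Measurable.mul
      · exact hKcont.measurable
      apply Measurable.mul
      · exact (((continuous_circleMap z₀ 1).sub continuous_const).measurable).inv
      · exact (hu.continuous.comp ((continuous_circleMap z₀ 1).prodMk continuous_const)).measurable)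
    (by
      apply Continuous.intervalIntegrable
      apply hKcont.mul
      apply Continuous.mul
      · refine Continuous.inv₀ ?_ ?_
        · exact (continuous_circleMap z₀ 1).sub continuous_const
        · intro θ
          simp only []
          rw [circleMap_sub_center]
          exact cmne θ
      · exact hu.continuous.comp ((continuous_circleMap z₀ 1).prodMk continuous_const))
    (by
      apply Continuous.aestronglyMeasurable
      apply Continuous.add
      · apply Continuous.fun_smul _ continuous_const
        apply hKcont.mul
        apply Continuous.mul
        · exact hu.continuous.comp ((continuous_circleMap z₀ 1).prodMk continuous_const)
        · refine Continuous.inv₀ ?_ ?_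
          · exact (((continuous_circleMap z₀ 1).sub continuous_const).pow 2)
          · intro θ
            simp only []
            rw [circleMap_sub_center]
            exact pow_ne_zero _ (cmne θ)
      · apply Continuous.fun_smul _ continuous_const
        apply hKcont.mul
        apply Continuous.mul
        · refine Continuous.inv₀ ?_ ?_
          · exact (continuous_circleMap z₀ 1).sub continuous_const
          · intro θ
            simp only []
            rw [circleMap_sub_center]
            exact cmne θ
        · exact (d2_cont hu b).comp (continuous_circleMap z₀ 1))
    (Filter.Eventually.of_forall fun θ _ => fun x hx => hbound θ x hx)
    (intervalIntegrable_const)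
    (Filter.Eventually.of_forall fun θ _ => fun x hx =>
      hasFDerivAt_Ff z₀ hu θ x (hqne θ x hx))
  have hG : DifferentiableAt ℂ
      (fun x : ℂ × ℂ => (2 * Real.pi * I : ℂ)⁻¹ • ∫ θ in (0:ℝ)..2 * Real.pi, Ff z₀ u x θ)
      (z₀, b) := (hmain.const_smul ((2 * Real.pi * I : ℂ)⁻¹)).differentiableAt
  apply hG.congr_of_eventuallyEq
  have hmem : {x : ℂ × ℂ | x.1 ∈ ball z₀ 1} ∈ 𝓝 ((z₀, b) : ℂ × ℂ) := by
    apply (isOpen_ball.preimage continuous_fst).mem_nhds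
    simp [mem_ball_self one_pos]
  filter_upwards [hmem] with x hx
  -- g x = G x
  have hφ : Differentiable ℂ (dslope (fun z => u (z, x.2)) z₀) :=
    differentiableOn_univ.mp ((Complex.differentiableOn_dslope univ_mem).mpr
      (diff_fib1 hu x.2).differentiableOn)
  have hcau := hφ.diffContOnCl.two_pi_i_inv_smul_circleIntegral_sub_inv_smul (R := 1)
    (c := z₀) (w := x.1) hx
  rw [← hcau]
  congr 1
  rw [circleIntegral]
  apply intervalIntegral.integral_congr
  intro θ _
  have hθ : circleMap z₀ 1 θ ≠ z₀ := circleMap_ne_center one_ne_zero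
  simp only [deriv_circleMap, smul_eq_mul]
  rw [dslope_of_ne _ hθ, slope_def_field]
  simp only [Ff, Kf, h0, sub_zero]
  rw [circleMap_sub_center]
  rw [div_eq_mul_inv]
  ring

lemma div_step (z₀ : ℂ) (u : ℂ × ℂ → ℂ) (hu : Differentiable ℂ u)
    (h0 : ∀ w, u (z₀, w) = 0) :
    ∃ g : ℂ × ℂ → ℂ, Differentiable ℂ g ∧ ∀ z w, u (z, w) = (z - z₀) * g (z, w) := by
  refine ⟨fun x => dslope (fun z => u (z, x.2)) z₀ x.1, ?_, ?_⟩
  · rintro ⟨a, b⟩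
    rcases eq_or_ne a z₀ with rfl | hne
    · exact diffAt_center _ b hu h0
    · have hopen : {x : ℂ × ℂ | x.1 ≠ z₀} ∈ 𝓝 ((a, b) : ℂ × ℂ) :=
        ((isOpen_compl_singleton).preimage continuous_fst).mem_nhds hne
      have hRHS : DifferentiableAt ℂ (fun x : ℂ × ℂ => (x.1 - z₀)⁻¹ * u x) (a, b) := by
        apply DifferentiableAt.mul
        · exact (differentiableAt_fst.sub_const z₀).inv (sub_ne_zero.mpr hne)
        · exact hu.differentiableAt
      apply hRHS.congr_of_eventuallyEq
      filter_upwards [hopen] with x hx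
      rw [dslope_of_ne _ hx, slope_def_field, h0, sub_zero, div_eq_inv_mul]
  · intro z w
    have := sub_smul_dslope (fun z' => u (z', w)) z₀ z
    simp only [smul_eq_mul, h0 w, sub_zero] at this
    exact this.symm

lemma aux (z₀ w₁ : ℂ) (n : ℕ) :
    ∀ u : ℂ × ℂ → ℂ, ∀ hu : Differentiable ℂ u, (∀ w, u (z₀, w) = 0) →
    analyticOrderAt (fun z => u (z, w₁)) z₀ = (n : ℕ∞) →
    ∃ m : ℕ, 1 ≤ m ∧ ∃ h₁ : ℂ × ℂ → ℂ, Differentiable ℂ h₁ ∧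
      (∀ z w : ℂ, u (z, w) = (z - z₀) ^ m * h₁ (z, w)) ∧ ∃ w : ℂ, h₁ (z₀, w) ≠ 0 := by
  induction n using Nat.strong_induction_on with
  | _ n IH =>
    intro u hu h0 hord
    obtain ⟨g, hg, hfac⟩ := div_step z₀ u hu h0
    by_cases hex : ∃ w, g (z₀, w) ≠ 0
    · exact ⟨1, le_refl 1, g, hg, fun z w => by rw [pow_one]; exact hfac z w, hex⟩
    · push_neg at hex
      have hA : AnalyticAt ℂ (fun z => u (z, w₁)) z₀ := (diff_fib1 hu w₁).analyticAt z₀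
      have hAg : AnalyticAt ℂ (fun z => g (z, w₁)) z₀ := (diff_fib1 hg w₁).analyticAt z₀
      have hn1 : 1 ≤ n := by
        by_contra hcon
        have hn0 : n = 0 := by omega
        subst hn0
        obtain ⟨φ, hφa, hφ0, hev⟩ := (hA.analyticOrderAt_eq_natCast (n := 0)).mp hord
        have := hev.self_of_nhds
        simp only [pow_zero, one_smul, h0 w₁] at this
        exact hφ0 this.symm
      obtain ⟨φ, hφa, hφ0, hev⟩ := (hA.analyticOrderAt_eq_natCast (n := n)).mp hord
      have hpunct : ∀ᶠ z in 𝓝[≠] z₀, g (z, w₁) = (z - z₀) ^ (n - 1) • φ z := by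
        filter_upwards [eventually_nhdsWithin_of_eventually_nhds hev,
          self_mem_nhdsWithin] with z hz hz'
        have hz0 : z - z₀ ≠ 0 := sub_ne_zero.mpr hz'
        apply mul_left_cancel₀ hz0
        rw [← hfac z w₁, hz, smul_eq_mul, smul_eq_mul, ← mul_assoc, ← pow_succ']
        congr 2
        omega
      have hz₀eq : g (z₀, w₁) = (z₀ - z₀) ^ (n - 1) • φ z₀ := by
        have h1 : Filter.Tendsto (fun z => g (z, w₁)) (𝓝[≠] z₀) (𝓝 (g (z₀, w₁))) :=
          (((diff_fib1 hg w₁).continuous.continuousAt)).continuousWithinAt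
        have h2 : Filter.Tendsto (fun z => (z - z₀) ^ (n - 1) • φ z) (𝓝[≠] z₀)
            (𝓝 ((z₀ - z₀) ^ (n - 1) • φ z₀)) := by
          apply ContinuousAt.continuousWithinAt
          exact (((continuousAt_id.sub continuousAt_const).pow _).smul hφa.continuousAt)
        exact tendsto_nhds_unique (h1.congr' hpunct) h2
      have hevg : ∀ᶠ z in 𝓝 z₀, g (z, w₁) = (z - z₀) ^ (n - 1) • φ z := by
        have := eventually_nhdsWithin_iff.mp hpunct
        filter_upwards [this] with z hz
        rcases eq_or_ne z z₀ with rfl | hne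
        · exact hz₀eq
        · exact hz hne
      have hordg : analyticOrderAt (fun z => g (z, w₁)) z₀ = ((n - 1 : ℕ) : ℕ∞) :=
        (hAg.analyticOrderAt_eq_natCast (n := n - 1)).mpr ⟨φ, hφa, hφ0, hevg⟩
      obtain ⟨m, hm, h₁, hh₁, hfac₁, hw⟩ := IH (n - 1) (by omega) g hg hex hordg
      refine ⟨m + 1, by omega, h₁, hh₁, fun z w => ?_, hw⟩
      rw [hfac z w, hfac₁ z w, ← mul_assoc, ← pow_succ']

end GraphsStmt6Aux

/-- If an entire function `h` on `ℂ²` is not identically zero and vanishes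
on the whole vertical line `{z₀} × ℂ`, then `h(z,w) = (z - z₀)^m · h₁(z,w)` for some
`m ≥ 1` and some entire `h₁` with `h₁(z₀, ·)` not identically zero. -/
theorem graphs_stmt6 (h : ℂ × ℂ → ℂ) (hh : Differentiable ℂ h) (z₀ : ℂ)
    (hne : ∃ p : ℂ × ℂ, h p ≠ 0)
    (hline : ∀ w : ℂ, h (z₀, w) = 0) :
    ∃ m : ℕ, 1 ≤ m ∧ ∃ h₁ : ℂ × ℂ → ℂ, Differentiable ℂ h₁ ∧
      (∀ z w : ℂ, h (z, w) = (z - z₀) ^ m * h₁ (z, w)) ∧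
      ∃ w : ℂ, h₁ (z₀, w) ≠ 0 := by
  obtain ⟨⟨z₁, w₁⟩, hp⟩ := hne
  have hA : AnalyticAt ℂ (fun z => h (z, w₁)) z₀ :=
    (GraphsStmt6Aux.diff_fib1 hh w₁).analyticAt z₀
  have hnetop : analyticOrderAt (fun z => h (z, w₁)) z₀ ≠ ⊤ := by
    intro htop
    rw [analyticOrderAt_eq_top] at htop
    have hzero : Set.EqOn (fun z => h (z, w₁)) 0 Set.univ := by
      apply AnalyticOnNhd.eqOn_zero_of_preconnected_of_eventuallyEq_zero
        (fun z _ => (GraphsStmt6Aux.diff_fib1 hh w₁).analyticAt z)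
        isPreconnected_univ (Set.mem_univ z₀)
      exact htop
    exact hp (hzero (Set.mem_univ z₁))
  obtain ⟨n, hn⟩ := WithTop.ne_top_iff_exists.mp hnetop
  exact GraphsStmt6Aux.aux z₀ w₁ n h hh hline hn.symm
end

section
/- There exists a holomorphic function f on ℂ∖K such that f(z)² = g(z) for all z ∈ ℂ∖K and f(z) → 1 as |z| → ∞. -/
open Filter Topology Complex

lemma aux_im_div (p q : ℝ) (z : ℂ) :
    ((z - p) / (z - q)).im = z.im * (p - q) / Complex.normSq (z - q) := by
  rw [Complex.div_im]
  simp only [Complex.sub_im, Complex.ofReal_im, Complex.sub_re, Complex.ofReal_re, sub_zero]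
  ring

lemma aux_real_div (x p q : ℝ) :
    ((x : ℂ) - p) / ((x : ℂ) - q) = (((x - p) / (x - q) : ℝ) : ℂ) := by
  push_cast
  ring_nf

lemma sqrt_pair_mul {u v : ℂ} (hu : u.im < 0) (hv : 0 < v.im) :
    u * v ∈ Complex.slitPlane ∧ (u * v) ^ (1/2 : ℂ) = u ^ (1/2 : ℂ) * v ^ (1/2 : ℂ) := by
  have hu0 : u ≠ 0 := by intro h; rw [h] at hu; simp at hu
  have hv0 : v ≠ 0 := by intro h; rw [h] at hv; simp at hv
  have h1 : arg u < 0 := Complex.arg_neg_iff.2 hu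
  have h2 : -Real.pi < arg u := Complex.neg_pi_lt_arg u
  have h3 : 0 < arg v := by
    refine lt_of_le_of_ne (Complex.arg_nonneg_iff.2 hv.le) fun h => ?_
    have := (Complex.arg_eq_zero_iff.1 h.symm).2
    exact hv.ne this.symm
  have h4 : arg v ≤ Real.pi := Complex.arg_le_pi v
  have harg : arg u + arg v ∈ Set.Ioc (-Real.pi) Real.pi := ⟨by linarith, by linarith⟩
  have hlog := Complex.log_mul hu0 hv0 harg
  have hne : u * v ≠ 0 := mul_ne_zero hu0 hv0
  have harg' : arg (u * v) = arg u + arg v := by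
    have := congrArg Complex.im hlog
    simpa [Complex.log_im] using this
  constructor
  · rw [Complex.mem_slitPlane_iff]
    by_contra hcon
    push_neg at hcon
    obtain ⟨hre, him⟩ := hcon
    have hre' : (u * v).re < 0 := by
      rcases lt_or_eq_of_le hre with h | h
      · exact h
      · exfalso; apply hne
        apply Complex.ext <;> simp [h, him]
    have : arg (u * v) = Real.pi := Complex.arg_eq_pi_iff.2 ⟨hre', him⟩
    rw [harg'] at this
    linarith
  · rw [Complex.cpow_def_of_ne_zero hne, Complex.cpow_def_of_ne_zero hu0,
      Complex.cpow_def_of_ne_zero hv0, hlog, add_mul, Complex.exp_add]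

lemma sqrt_negreal_mul {u v : ℂ} (hu : u.im = 0) (hu' : u.re < 0)
    (hv : v.im = 0) (hv' : v.re < 0) :
    u * v ∈ Complex.slitPlane ∧ (u * v) ^ (1/2 : ℂ) = -(u ^ (1/2 : ℂ) * v ^ (1/2 : ℂ)) := by
  have hu0 : u ≠ 0 := by intro h; rw [h] at hu'; simp at hu'
  have hv0 : v ≠ 0 := by intro h; rw [h] at hv'; simp at hv'
  have hre : (u * v).re = u.re * v.re := by rw [Complex.mul_re, hu, hv]; ring
  have him : (u * v).im = 0 := by rw [Complex.mul_im, hu, hv]; ring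
  have hpos : 0 < (u * v).re := by rw [hre]; exact mul_pos_of_neg_of_neg hu' hv'
  refine ⟨Or.inl hpos, ?_⟩
  have harguv : Complex.arg (u * v) = 0 := Complex.arg_eq_zero_iff.2 ⟨hpos.le, him⟩
  have hloguv : Complex.log (u * v) = ((Real.log (‖u * v‖) : ℝ) : ℂ) := by
    apply Complex.ext
    · simp [Complex.log_re]
    · simp [Complex.log_im, harguv]
  have hlogu : Complex.log u = ((Real.log (‖u‖) : ℝ) : ℂ) + Real.pi * Complex.I := by
    apply Complex.ext
    · simp [Complex.log_re]
    · simp [Complex.log_im, Complex.arg_eq_pi_iff.2 ⟨hu', hu⟩]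
  have hlogv : Complex.log v = ((Real.log (‖v‖) : ℝ) : ℂ) + Real.pi * Complex.I := by
    apply Complex.ext
    · simp [Complex.log_re]
    · simp [Complex.log_im, Complex.arg_eq_pi_iff.2 ⟨hv', hv⟩]
  rw [Complex.cpow_def_of_ne_zero (mul_ne_zero hu0 hv0), Complex.cpow_def_of_ne_zero hu0,
    Complex.cpow_def_of_ne_zero hv0, hloguv, hlogu, hlogv, ← Complex.exp_add]
  have habs : ‖u * v‖ = ‖u‖ * ‖v‖ := norm_mul _ _
  have hl : Real.log (‖u * v‖) =
      Real.log (‖u‖) + Real.log (‖v‖) := by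
    rw [habs, Real.log_mul (norm_ne_zero_iff.2 hu0) (norm_ne_zero_iff.2 hv0)]
  rw [hl]
  have : (((Real.log (‖u‖) : ℝ) : ℂ) + Real.pi * Complex.I) * (1/2) +
      (((Real.log (‖v‖) : ℝ) : ℂ) + Real.pi * Complex.I) * (1/2) =
      ((Real.log (‖u‖) + Real.log (‖v‖) : ℝ) : ℂ) * (1/2) +
      Real.pi * Complex.I := by push_cast; ring
  rw [this, Complex.exp_add, Complex.exp_pi_mul_I]
  ring

set_option maxHeartbeats 2000000 in
/-- There exists a holomorphic function `f` on `ℂ ∖ K` with `f² = g` on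
`ℂ ∖ K` and `f(z) → 1` as `|z| → ∞`. -/
theorem graphs_stmt9 (a b : ℕ → ℝ) (hab0 : a 0 < b 0)
    (hj : ∀ j : ℕ, 1 ≤ j → a 0 < a j ∧ a j < b j ∧ b j < b 0)
    (hdisj : ∀ i j : ℕ, 1 ≤ i → 1 ≤ j → i ≠ j →
      Disjoint (Set.Icc (a i) (b i)) (Set.Icc (a j) (b j)))
    (Kr : Set ℝ)
    (hKr : Kr = Set.Icc (a 0) (b 0) \ ⋃ j ∈ {j : ℕ | 1 ≤ j}, Set.Ioo (a j) (b j))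
    (K : Set ℂ) (hK : K = (fun x : ℝ => (x : ℂ)) '' Kr)
    (g : ℕ → ℂ → ℂ)
    (hg : ∀ n z, g n z = ((z - (a 0 : ℂ)) / (z - (b 0 : ℂ))) *
      ∏ j ∈ Finset.Icc 1 n, (z - (b j : ℂ)) / (z - (a j : ℂ)))
    (G : ℂ → ℂ) (hGd : DifferentiableOn ℂ G Kᶜ)
    (hGlim : ∀ L : Set ℂ, L ⊆ Kᶜ → IsCompact L →
      TendstoUniformlyOn (fun n z => g n z) G atTop L) :
    ∃ f : ℂ → ℂ, DifferentiableOn ℂ f Kᶜ ∧ (∀ z ∈ Kᶜ, f z ^ 2 = G z) ∧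
      Tendsto f (Bornology.cobounded ℂ) (𝓝 1) := by
  classical
  set M : ℝ := max |a 0| |b 0| with hMdef
  -- interval ordering facts
  have hord : ∀ j : ℕ, a 0 < a (j+1) ∧ a (j+1) < b (j+1) ∧ b (j+1) < b 0 :=
    fun j => hj (j+1) (by omega)
  -- endpoints in Kr
  have hKrIcc : Kr ⊆ Set.Icc (a 0) (b 0) := by rw [hKr]; exact Set.diff_subset
  have hmemIoo : ∀ (x : ℝ) (i : ℕ), 1 ≤ i → x ∈ Set.Ioo (a i) (b i) → x ∉ Kr := by
    intro x i hi hx hxK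
    rw [hKr] at hxK
    exact hxK.2 (Set.mem_biUnion hi hx)
  have hKrend : ∀ j : ℕ, 1 ≤ j → a j ∈ Kr ∧ b j ∈ Kr := by
    intro j hj1
    obtain ⟨h1, h2, h3⟩ := hj j hj1
    rw [hKr]
    constructor
    · refine ⟨⟨h1.le, (h2.trans h3).le⟩, ?_⟩
      intro hx
      rw [Set.mem_iUnion₂] at hx
      obtain ⟨i, hi1, hxi⟩ := hx
      by_cases hij : i = j
      · subst hij; exact lt_irrefl _ hxi.1
      · exact Set.disjoint_left.1 (hdisj i j hi1 hj1 hij) (Set.Ioo_subset_Icc_self hxi)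
          (Set.mem_Icc.2 ⟨le_refl _, h2.le⟩)
    · refine ⟨⟨(h1.trans h2).le, h3.le⟩, ?_⟩
      intro hx
      rw [Set.mem_iUnion₂] at hx
      obtain ⟨i, hi1, hxi⟩ := hx
      by_cases hij : i = j
      · subst hij; exact lt_irrefl _ hxi.2
      · exact Set.disjoint_left.1 (hdisj i j hi1 hj1 hij) (Set.Ioo_subset_Icc_self hxi)
          (Set.mem_Icc.2 ⟨h2.le, le_refl _⟩)
  have hKr0 : a 0 ∈ Kr ∧ b 0 ∈ Kr := by
    rw [hKr]
    constructor
    · refine ⟨⟨le_refl _, hab0.le⟩, ?_⟩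
      intro hx
      rw [Set.mem_iUnion₂] at hx
      obtain ⟨i, hi1, hxi⟩ := hx
      exact lt_irrefl _ ((hj i hi1).1.trans hxi.1)
    · refine ⟨⟨hab0.le, le_refl _⟩, ?_⟩
      intro hx
      rw [Set.mem_iUnion₂] at hx
      obtain ⟨i, hi1, hxi⟩ := hx
      exact lt_irrefl _ (hxi.2.trans (hj i hi1).2.2)
  have hmemK : ∀ x : ℝ, x ∈ Kr → (x : ℂ) ∈ K := by
    intro x hx; rw [hK]; exact ⟨x, hx, rfl⟩
  have hKiff : ∀ x : ℝ, (x : ℂ) ∈ K ↔ x ∈ Kr := by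
    intro x
    refine ⟨fun h => ?_, hmemK x⟩
    rw [hK] at h
    obtain ⟨y, hy, hxy⟩ := h
    have : y = x := Complex.ofReal_injective hxy
    rwa [this] at hy
  have hnotK_im : ∀ z : ℂ, z.im ≠ 0 → z ∈ Kᶜ := by
    intro z hz hzK
    rw [hK] at hzK
    obtain ⟨y, _, hxy⟩ := hzK
    apply hz
    rw [← hxy]
    simp
  have hsub_ne : ∀ z ∈ Kᶜ, ∀ x : ℝ, (x : ℂ) ∈ K → z - x ≠ 0 := by
    intro z hz x hx h
    rw [sub_eq_zero] at h
    exact hz (h ▸ hx)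
  have habs_le_M : ∀ x : ℝ, a 0 ≤ x → x ≤ b 0 → |x| ≤ M := by
    intro x h1 h2
    exact abs_le_max_abs_abs h1 h2
  have hKabs : ∀ z ∈ K, ‖z‖ ≤ M := by
    intro z hz
    rw [hK] at hz
    obtain ⟨x, hx, rfl⟩ := hz
    rw [Complex.norm_real, Real.norm_eq_abs]
    exact habs_le_M x (hKrIcc hx).1 (hKrIcc hx).2
  -- compactness of K
  have hKclosed : IsClosed K := by
    have hKrc : IsCompact Kr := by
      rw [hKr]
      refine IsCompact.of_isClosed_subset isCompact_Icc ?_ Set.diff_subset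
      exact IsClosed.sdiff isClosed_Icc (isOpen_biUnion fun i _ => isOpen_Ioo)
    have : IsCompact K := by
      rw [hK]
      exact hKrc.image Complex.continuous_ofReal
    exact this.isClosed
  have hKopen : IsOpen Kᶜ := hKclosed.isOpen_compl
  -- summability of lengths
  have hlen_pos : ∀ j : ℕ, 0 < b (j+1) - a (j+1) := fun j => sub_pos.2 (hord j).2.1
  have hsumlen : Summable (fun j : ℕ => b (j+1) - a (j+1)) := by
    apply summable_of_sum_range_le (fun j => (hlen_pos j).le)
    intro n
    have hd : Set.PairwiseDisjoint (↑(Finset.range n) : Set ℕ)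
        (fun j => Set.Icc (a (j+1)) (b (j+1))) := by
      intro i _ j _ hij
      exact hdisj (i+1) (j+1) (by omega) (by omega) (by omega)
    have hmeas := MeasureTheory.measure_biUnion_finset (μ := MeasureTheory.volume) hd
      (fun j _ => measurableSet_Icc)
    have hsub : (⋃ j ∈ Finset.range n, Set.Icc (a (j+1)) (b (j+1))) ⊆ Set.Icc (a 0) (b 0) := by
      intro x hx
      rw [Set.mem_iUnion₂] at hx
      obtain ⟨i, _, hxi⟩ := hx
      exact ⟨(hord i).1.le.trans hxi.1, hxi.2.trans (hord i).2.2.le⟩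
    have hle := (MeasureTheory.measure_mono hsub).trans_eq (Real.volume_Icc (a := a 0) (b := b 0))
    rw [hmeas] at hle
    simp_rw [Real.volume_Icc] at hle
    rw [← ENNReal.ofReal_sum_of_nonneg (fun i _ => (hlen_pos i).le)] at hle
    exact (ENNReal.ofReal_le_ofReal_iff (by linarith)).1 hle
  set S : ℝ := ∑' j : ℕ, (b (j+1) - a (j+1)) with hSdef
  have hS_nonneg : 0 ≤ S := tsum_nonneg fun j => (hlen_pos j).le
  -- the functions
  set c : ℂ → ℂ := fun z => if z.im = 0 ∧ a 0 < z.re ∧ z.re < b 0 then -1 else 1 with hcdef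
  set w0 : ℂ → ℂ := fun z => (z - (a 0 : ℂ)) / (z - (b 0 : ℂ)) with hw0def
  set ww : ℕ → ℂ → ℂ := fun j z => (z - (b (j+1) : ℂ)) / (z - (a (j+1) : ℂ)) with hwwdef
  set l : ℕ → ℂ → ℂ := fun j z => Complex.log (ww j z) with hldef
  set F : ℕ → ℂ → ℂ :=
    fun n z => c z * w0 z ^ (1/2 : ℂ) * Complex.exp ((∑ j ∈ Finset.range n, l j z) / 2)
    with hFdef
  set f : ℂ → ℂ :=
    fun z => c z * w0 z ^ (1/2 : ℂ) * Complex.exp ((∑' j : ℕ, l j z) / 2) with hfdef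
  have hcabs : ∀ z, ‖c z‖ = 1 := by
    intro z
    rw [hcdef]
    by_cases h : z.im = 0 ∧ a 0 < z.re ∧ z.re < b 0 <;> simp [h]
  have hc_im : ∀ z : ℂ, z.im ≠ 0 → c z = 1 := by
    intro z hz
    rw [hcdef]
    simp only [ite_eq_right_iff]
    intro h
    exact absurd h.1 hz
  have hww_ne : ∀ (j : ℕ) (z : ℂ), z ∈ Kᶜ → ww j z ≠ 0 := by
    intro j z hz
    rw [hwwdef]
    exact div_ne_zero (hsub_ne z hz _ (hmemK _ (hKrend (j+1) (by omega)).2))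
      (hsub_ne z hz _ (hmemK _ (hKrend (j+1) (by omega)).1))
  have hw0_ne : ∀ z ∈ Kᶜ, w0 z ≠ 0 := by
    intro z hz
    rw [hw0def]
    exact div_ne_zero (hsub_ne z hz _ (hmemK _ hKr0.1)) (hsub_ne z hz _ (hmemK _ hKr0.2))
  -- F n squared equals g n
  have hexp_half : ∀ (j : ℕ) (z : ℂ), z ∈ Kᶜ →
      Complex.exp (l j z / 2) = ww j z ^ (1/2 : ℂ) := by
    intro j z hz
    rw [Complex.cpow_def_of_ne_zero (hww_ne j z hz), hldef]
    congr 1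
    ring
  have hF2 : ∀ (n : ℕ) (z : ℂ), z ∈ Kᶜ → F n z ^ 2 = g n z := by
    intro n z hz
    have hc2 : c z ^ 2 = 1 := by
      rw [hcdef]
      by_cases h : z.im = 0 ∧ a 0 < z.re ∧ z.re < b 0 <;> simp [h]
    have hw : (w0 z ^ (1/2 : ℂ)) ^ 2 = w0 z := by
      rw [sq, ← Complex.cpow_add _ _ (hw0_ne z hz)]
      norm_num
    have hexp2 : Complex.exp ((∑ j ∈ Finset.range n, l j z) / 2) ^ 2 =
        Complex.exp (∑ j ∈ Finset.range n, l j z) := by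
      rw [sq, ← Complex.exp_add, add_halves]
    have hexps : Complex.exp (∑ j ∈ Finset.range n, l j z) =
        ∏ j ∈ Finset.range n, ww j z := by
      rw [Complex.exp_sum]
      exact Finset.prod_congr rfl fun j _ => Complex.exp_log (hww_ne j z hz)
    have hreindex : ∏ j ∈ Finset.range n, ww j z =
        ∏ j ∈ Finset.Icc 1 n, (z - (b j : ℂ)) / (z - (a j : ℂ)) := by
      rw [hwwdef]
      refine Finset.prod_nbij' (fun i => i + 1) (fun i => i - 1) ?_ ?_ ?_ ?_ ?_
      · intro x hx; simp at hx ⊢; try omega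
      · intro x hx; simp at hx ⊢; try omega
      · intro x hx; simp at hx ⊢; try omega
      · intro x hx; simp at hx ⊢; try omega
      · intro x hx; rfl
    calc F n z ^ 2 = c z ^ 2 * (w0 z ^ (1/2 : ℂ)) ^ 2 *
          Complex.exp ((∑ j ∈ Finset.range n, l j z) / 2) ^ 2 := by rw [hFdef]; ring
    _ = w0 z * ∏ j ∈ Finset.Icc 1 n, (z - (b j : ℂ)) / (z - (a j : ℂ)) := by
        rw [hc2, hw, hexp2, hexps, hreindex]; ring
    _ = g n z := by rw [hg, hw0def]
  -- uniform convergence on compacts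
  have hUC : ∀ L : Set ℂ, L ⊆ Kᶜ → IsCompact L →
      TendstoUniformlyOn F f atTop L := by
    intro L hLsub hLc
    rcases L.eq_empty_or_nonempty with rfl | hLne
    · exact tendstoUniformlyOn_empty
    obtain ⟨z₁, hz₁L, hz₁min⟩ := hLc.exists_isMinOn hLne
      ((Metric.continuous_infDist_pt K).continuousOn)
    have hKne : K.Nonempty := ⟨(a 0 : ℂ), hmemK _ hKr0.1⟩
    set d : ℝ := Metric.infDist z₁ K with hddef
    have hd0 : 0 < d := (hKclosed.notMem_iff_infDist_pos hKne).1 (hLsub hz₁L)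
    have hdist : ∀ z ∈ L, ∀ x : ℝ, (x : ℂ) ∈ K → d ≤ ‖z - x‖ := by
      intro z hz x hx
      have h1 : d ≤ Metric.infDist z K := isMinOn_iff.1 hz₁min z hz
      have h2 : Metric.infDist z K ≤ dist z x := Metric.infDist_le_dist_of_mem hx
      rw [Complex.dist_eq] at h2
      linarith
    obtain ⟨DL, hDL⟩ := (Metric.isBounded_iff_subset_closedBall 0).1 hLc.isBounded
    set D' : ℝ := |DL| + M + 1 with hD'def
    have hzabs : ∀ z ∈ L, ‖z‖ ≤ |DL| := by
      intro z hz
      have := hDL hz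
      rw [Metric.mem_closedBall, Complex.dist_eq, sub_zero] at this
      exact this.trans (le_abs_self DL)
    have habs_up : ∀ z ∈ L, ∀ x : ℝ, (x : ℂ) ∈ K → ‖z - x‖ ≤ D' := by
      intro z hz x hx
      calc ‖z - x‖ ≤ ‖z‖ + ‖(x:ℂ)‖ := by
            simpa [sub_eq_add_neg] using norm_add_le z (-(x:ℂ))
      _ ≤ |DL| + M := add_le_add (hzabs z hz) (hKabs _ hx)
      _ ≤ D' := by rw [hD'def]; linarith
    have hdD' : d ≤ D' := (hdist z₁ hz₁L (a 0) (hmemK _ hKr0.1)).trans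
      (habs_up z₁ hz₁L (a 0) (hmemK _ hKr0.1))
    have hD'0 : 0 < D' := lt_of_lt_of_le hd0 hdD'
    -- difference bound
    have hww1 : ∀ (j : ℕ), ∀ z ∈ L, ‖ww j z - 1‖ ≤ (b (j+1) - a (j+1)) / d := by
      intro j z hz
      have hden : z - ((a (j+1) : ℝ) : ℂ) ≠ 0 :=
        hsub_ne z (hLsub hz) _ (hmemK _ (hKrend (j+1) (by omega)).1)
      have heq : ww j z - 1 = (((a (j+1) : ℝ) : ℂ) - ((b (j+1) : ℝ) : ℂ)) /
          (z - ((a (j+1) : ℝ) : ℂ)) := by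
        rw [hwwdef]
        field_simp
        ring
      rw [heq, norm_div]
      have hnum : ‖((a (j+1) : ℝ) : ℂ) - ((b (j+1) : ℝ) : ℂ)‖ =
          b (j+1) - a (j+1) := by
        rw [show ((a (j+1) : ℝ) : ℂ) - ((b (j+1) : ℝ) : ℂ) = ((a (j+1) - b (j+1) : ℝ) : ℂ) by
          push_cast; ring, Complex.norm_real, Real.norm_eq_abs, abs_of_neg (by linarith [hlen_pos j]), neg_sub]
      rw [hnum]
      exact div_le_div_of_nonneg_left (hlen_pos j).le hd0
        (hdist z hz _ (hmemK _ (hKrend (j+1) (by omega)).1))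
    have habsww_up : ∀ (j : ℕ), ∀ z ∈ L, ‖ww j z‖ ≤ D' / d := by
      intro j z hz
      rw [hwwdef]
      simp only []
      rw [norm_div]
      exact div_le_div₀ hD'0.le (habs_up z hz _ (hmemK _ (hKrend (j+1) (by omega)).2)) hd0
        (hdist z hz _ (hmemK _ (hKrend (j+1) (by omega)).1))
    have habsww_lo : ∀ (j : ℕ), ∀ z ∈ L, d / D' ≤ ‖ww j z‖ := by
      intro j z hz
      rw [hwwdef]
      simp only []
      rw [norm_div]
      refine div_le_div₀ (norm_nonneg _)
        (hdist z hz _ (hmemK _ (hKrend (j+1) (by omega)).2)) ?_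
        (habs_up z hz _ (hmemK _ (hKrend (j+1) (by omega)).1))
      exact lt_of_lt_of_le hd0 (hdist z hz _ (hmemK _ (hKrend (j+1) (by omega)).1))
    set Cg : ℝ := Real.log (D' / d) + Real.pi with hCgdef
    have hCg0 : 0 ≤ Cg := by
      have h1 : (1 : ℝ) ≤ D' / d := (one_le_div hd0).2 hdD'
      have := Real.log_nonneg h1
      have := Real.pi_pos
      rw [hCgdef]; linarith
    have hlog_gen : ∀ (j : ℕ), ∀ z ∈ L, ‖l j z‖ ≤ Cg := by
      intro j z hz
      have hwne : ww j z ≠ 0 := hww_ne j z (hLsub hz)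
      have habspos : 0 < ‖ww j z‖ := norm_pos_iff.2 hwne
      have hre : ‖l j z‖ ≤ |Real.log (‖ww j z‖)| + |Complex.arg (ww j z)| := by
        rw [hldef]
        refine (Complex.norm_le_abs_re_add_abs_im _).trans ?_
        rw [Complex.log_re, Complex.log_im]
      have harg : |Complex.arg (ww j z)| ≤ Real.pi := Complex.abs_arg_le_pi _
      have hlog : |Real.log (‖ww j z‖)| ≤ Real.log (D' / d) := by
        rcases le_or_gt 1 (‖ww j z‖) with h | h
        · rw [_root_.abs_of_nonneg (Real.log_nonneg h)]
          exact Real.log_le_log habspos (habsww_up j z hz)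
        · rw [_root_.abs_of_neg (Real.log_neg habspos h), ← Real.log_inv]
          apply Real.log_le_log (by positivity)
          rw [← inv_div d D']
          exact inv_anti₀ (by positivity) (habsww_lo j z hz)
      rw [hCgdef]
      linarith
    set u : ℕ → ℝ := fun j => if (b (j+1) - a (j+1)) / d ≤ 1/2
      then 3/2 * ((b (j+1) - a (j+1)) / d) else Cg with hudef
    have hu_nonneg : ∀ j, 0 ≤ u j := by
      intro j
      rw [hudef]
      beta_reduce
      split_ifs with h
      · have := (hlen_pos j).le
        positivity
      · exact hCg0
    have hu_bound : ∀ (j : ℕ), ∀ z ∈ L, ‖l j z‖ ≤ u j := by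
      intro j z hz
      rw [hudef]
      beta_reduce
      split_ifs with h
      ·
        have h1 : ‖ww j z - 1‖ ≤ 1/2 := by
          exact (hww1 j z hz).trans h
        have h2 := Complex.norm_log_one_add_half_le_self (z := ww j z - 1) h1
        have h3 : (1 : ℂ) + (ww j z - 1) = ww j z := by ring
        rw [h3] at h2
        rw [hldef]
        refine h2.trans ?_
        have h4 : ‖ww j z - 1‖ ≤ (b (j+1) - a (j+1)) / d := by
          exact hww1 j z hz
        linarith
      · exact hlog_gen j z hz
    have hu_sum : Summable u := by
      have htend : Tendsto (fun j : ℕ => (b (j+1) - a (j+1)) / d) atTop (𝓝 0) := by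
        have := hsumlen.tendsto_atTop_zero.div_const d
        simpa using this
      obtain ⟨N, hN⟩ := Filter.eventually_atTop.1 ((tendsto_order.1 htend).2 (1/2) (by norm_num))
      rw [← summable_nat_add_iff N]
      have hs2 : Summable (fun j : ℕ => 3/2 * ((b (j + N + 1) - a (j + N + 1)) / d)) := by
        have h0 : Summable (fun j : ℕ => b (j + N + 1) - a (j + N + 1)) := by
          simpa using (summable_nat_add_iff (f := fun j : ℕ => b (j+1) - a (j+1)) N).2 hsumlen
        exact (h0.div_const d).mul_left _
      refine hs2.congr fun j => ?_
      rw [hudef]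
      beta_reduce
      split_ifs with hcond
      · rfl
      · exact absurd (hN (j + N) (by omega)).le hcond
    have hphi := tendstoUniformlyOn_tsum_nat hu_sum
      (f := fun j (z : ℂ) => l j z) (fun j z hz => hu_bound j z hz)
    set U : ℝ := ∑' j, u j with hUdef
    have hpartU : ∀ (n : ℕ), ∀ z ∈ L, ‖∑ j ∈ Finset.range n, l j z‖ ≤ U := by
      intro n z hz
      refine (norm_sum_le _ _).trans ?_
      refine (Finset.sum_le_sum fun j _ => hu_bound j z hz).trans ?_
      exact Summable.sum_le_tsum _ (fun i _ => hu_nonneg i) hu_sum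
    have habsw0_up : ∀ z ∈ L, ‖w0 z‖ ≤ D' / d := by
      intro z hz
      rw [hw0def]
      simp only []
      rw [norm_div]
      exact div_le_div₀ hD'0.le (habs_up z hz _ (hmemK _ hKr0.1)) hd0
        (hdist z hz _ (hmemK _ hKr0.2))
    set B0 : ℝ := max 1 (D' / d) with hB0def
    have hB0pos : 0 < B0 := lt_of_lt_of_le one_pos (le_max_left _ _)
    have hB0 : ∀ z ∈ L, ‖w0 z ^ (1/2 : ℂ)‖ ≤ B0 := by
      intro z hz
      have hhalf : (1/2 : ℂ) = ((1/2 : ℝ) : ℂ) := by norm_num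
      rw [hhalf, Complex.norm_cpow_of_ne_zero (hw0_ne z (hLsub hz))]
      simp only [Complex.ofReal_re, Complex.ofReal_im, mul_zero, Real.exp_zero, div_one]
      rcases le_or_gt (‖w0 z‖) 1 with h | h
      · refine le_trans ?_ (le_max_left 1 (D' / d))
        exact Real.rpow_le_one (norm_nonneg _) h (by norm_num)
      · refine le_trans ?_ (le_max_right 1 (D' / d))
        have h1 : ‖w0 z‖ ^ (1/2 : ℝ) ≤ ‖w0 z‖ ^ (1 : ℝ) :=
          Real.rpow_le_rpow_of_exponent_le h.le (by norm_num)
        rw [Real.rpow_one] at h1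
        exact h1.trans (habsw0_up z hz)
    rw [Metric.tendstoUniformlyOn_iff]
    intro ε hε
    set E : ℝ := B0 * Real.exp (U/2) with hEdef
    have hE0 : 0 < E := by positivity
    set δ : ℝ := min 1 (ε / (2*E)) with hδdef
    have hδ0 : 0 < δ := lt_min one_pos (by positivity)
    have hev := (Metric.tendstoUniformlyOn_iff.1 hphi) δ hδ0
    filter_upwards [hev] with n hn z hzL
    have hdistφ : dist (∑' j, l j z) (∑ j ∈ Finset.range n, l j z) < δ := hn z hzL
    rw [Complex.dist_eq] at hdistφ ⊢
    set X : ℂ := (∑' j, l j z) / 2 with hXdef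
    set Y : ℂ := (∑ j ∈ Finset.range n, l j z) / 2 with hYdef
    have hXY : ‖X - Y‖ = ‖(∑' j, l j z) - ∑ j ∈ Finset.range n, l j z‖ / 2 := by
      rw [hXdef, hYdef, div_sub_div_same, norm_div, Complex.norm_two]
    have hfactor : Complex.exp X - Complex.exp Y = Complex.exp Y * (Complex.exp (X - Y) - 1) := by
      rw [mul_sub, mul_one, ← Complex.exp_add]
      congr 2
      ring
    have hexpY : ‖Complex.exp Y‖ ≤ Real.exp (U/2) := by
      rw [Complex.norm_exp]
      apply Real.exp_le_exp.2
      have h1 : Y.re ≤ |Y.re| := le_abs_self _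
      have h2 : |Y.re| ≤ ‖Y‖ := Complex.abs_re_le_norm Y
      have h3 : ‖Y‖ ≤ U / 2 := by
        rw [hYdef, norm_div, Complex.norm_two]
        have := hpartU n z hzL
        linarith
      linarith
    have hXY1 : ‖X - Y‖ ≤ 1 := by
      rw [hXY]
      have : δ ≤ 1 := min_le_left _ _
      linarith
    have hexpdiff : ‖Complex.exp (X - Y) - 1‖ ≤ 2 * ‖X - Y‖ :=
      Complex.norm_exp_sub_one_le hXY1
    have hmain : ‖f z - F n z‖ ≤ E * (2 * ‖X - Y‖) := by
      have heq : f z - F n z = c z * w0 z ^ (1/2 : ℂ) * (Complex.exp X - Complex.exp Y) := by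
        rw [hfdef, hFdef, hXdef, hYdef]
        ring
      rw [heq, norm_mul, norm_mul, hcabs, one_mul, hfactor, norm_mul]
      calc ‖w0 z ^ (1/2:ℂ)‖ *
            (‖Complex.exp Y‖ * ‖Complex.exp (X - Y) - 1‖)
          ≤ B0 * (Real.exp (U/2) * (2 * ‖X - Y‖)) := by
            apply mul_le_mul (hB0 z hzL) ?_ (by positivity) hB0pos.le
            apply mul_le_mul hexpY hexpdiff (norm_nonneg _) (Real.exp_pos _).le
      _ = E * (2 * ‖X - Y‖) := by rw [hEdef]; ring
    have hlast : E * (2 * ‖X - Y‖) < ε := by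
      have h1 : 2 * ‖X - Y‖ < δ := by rw [hXY]; linarith
      have h2 : E * (2 * ‖X - Y‖) < E * δ := by
        apply mul_lt_mul_of_pos_left h1 hE0
      have h3 : E * δ ≤ E * (ε / (2*E)) := by
        apply mul_le_mul_of_nonneg_left (min_le_right _ _) hE0.le
      have h4 : E * (ε / (2*E)) = ε / 2 := by field_simp
      linarith
    calc ‖f z - F n z‖ ≤ E * (2 * ‖X - Y‖) := hmain
    _ < ε := hlast
  refine ⟨f, ?_, ?_, ?_⟩
  · -- differentiability
    have hslit_im : ∀ (p q : ℝ), p ≠ q → ∀ z : ℂ, z.im ≠ 0 →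
        ((z - p) / (z - q)) ∈ Complex.slitPlane := by
      intro p q hpq z hz
      rw [Complex.mem_slitPlane_iff]
      right
      rw [aux_im_div]
      have hzq : z - (q : ℂ) ≠ 0 := by
        intro h
        rw [sub_eq_zero] at h
        apply hz
        rw [h]
        simp
      have hN : 0 < Complex.normSq (z - q) := Complex.normSq_pos.2 hzq
      exact div_ne_zero (mul_ne_zero hz (sub_ne_zero.2 hpq)) hN.ne'
    have hslit_pos : ∀ (x p q : ℝ), 0 < (x - p) / (x - q) →
        (((x : ℂ) - p) / ((x : ℂ) - q)) ∈ Complex.slitPlane := by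
      intro x p q h
      refine Complex.mem_slitPlane_iff.2 (Or.inl ?_)
      rw [aux_real_div, Complex.ofReal_re]
      exact h
    have hslit_real : ∀ z : ℂ, z.im = 0 → ∀ (p q : ℝ), 0 < (z.re - p) / (z.re - q) →
        ((z - p) / (z - q)) ∈ Complex.slitPlane := by
      intro z h0 p q hpos
      have hzeq : z = ((z.re : ℝ) : ℂ) := by
        apply Complex.ext <;> simp [h0]
      rw [hzeq]
      exact hslit_pos z.re p q hpos
    have himw0p : ∀ z : ℂ, z ∈ Kᶜ → 0 < z.im → (w0 z).im < 0 := by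
      intro z hz him
      rw [hw0def]
      beta_reduce
      rw [aux_im_div]
      apply div_neg_of_neg_of_pos
      · exact mul_neg_of_pos_of_neg him (by linarith)
      · exact Complex.normSq_pos.2 (hsub_ne z hz _ (hmemK _ hKr0.2))
    have himw0n : ∀ z : ℂ, z ∈ Kᶜ → z.im < 0 → 0 < (w0 z).im := by
      intro z hz him
      rw [hw0def]
      beta_reduce
      rw [aux_im_div]
      apply div_pos
      · exact mul_pos_of_neg_of_neg him (by linarith)
      · exact Complex.normSq_pos.2 (hsub_ne z hz _ (hmemK _ hKr0.2))
    have himwwp : ∀ (j : ℕ) (z : ℂ), z ∈ Kᶜ → 0 < z.im → 0 < (ww j z).im := by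
      intro j z hz him
      rw [hwwdef]
      beta_reduce
      rw [aux_im_div]
      apply div_pos
      · exact mul_pos him (by linarith [hlen_pos j])
      · exact Complex.normSq_pos.2 (hsub_ne z hz _ (hmemK _ (hKrend (j+1) (by omega)).1))
    have himwwn : ∀ (j : ℕ) (z : ℂ), z ∈ Kᶜ → z.im < 0 → (ww j z).im < 0 := by
      intro j z hz him
      rw [hwwdef]
      beta_reduce
      rw [aux_im_div]
      apply div_neg_of_neg_of_pos
      · exact mul_neg_of_neg_of_pos him (by linarith [hlen_pos j])
      · exact Complex.normSq_pos.2 (hsub_ne z hz _ (hmemK _ (hKrend (j+1) (by omega)).1))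
    have hw0diff : ∀ z ∈ Kᶜ, DifferentiableAt ℂ w0 z := by
      intro z hz
      rw [hw0def]
      apply DifferentiableAt.div
      · fun_prop
      · fun_prop
      · exact hsub_ne z hz _ (hmemK _ hKr0.2)
    have hwwdiff : ∀ (j : ℕ), ∀ z ∈ Kᶜ, DifferentiableAt ℂ (fun w => ww j w) z := by
      intro j z hz
      rw [hwwdef]
      apply DifferentiableAt.div
      · fun_prop
      · fun_prop
      · exact hsub_ne z hz _ (hmemK _ (hKrend (j+1) (by omega)).1)
    intro z₀ hz₀
    have key : ∃ ρ : ℝ, 0 < ρ ∧ Metric.ball z₀ ρ ⊆ Kᶜ ∧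
        ∀ᶠ n in atTop, DifferentiableOn ℂ (F n) (Metric.ball z₀ ρ) := by
      have caseA : ∀ ρ : ℝ, 0 < ρ → Metric.ball z₀ ρ ⊆ Kᶜ →
          (∀ z ∈ Metric.ball z₀ ρ, c z = 1 ∧ w0 z ∈ Complex.slitPlane ∧
            ∀ j : ℕ, ww j z ∈ Complex.slitPlane) →
          ∃ ρ : ℝ, 0 < ρ ∧ Metric.ball z₀ ρ ⊆ Kᶜ ∧
          ∀ᶠ n in atTop, DifferentiableOn ℂ (F n) (Metric.ball z₀ ρ) := by
        intro ρ hρ hsubK hprop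
        refine ⟨ρ, hρ, hsubK, Filter.Eventually.of_forall fun n => ?_⟩
        have hdiff : DifferentiableOn ℂ
            (fun z => w0 z ^ (1/2 : ℂ) * Complex.exp ((∑ j ∈ Finset.range n, l j z) / 2))
            (Metric.ball z₀ ρ) := by
          intro z hz
          apply DifferentiableAt.differentiableWithinAt
          have hzK : z ∈ Kᶜ := hsubK hz
          apply DifferentiableAt.mul
          · exact (hw0diff z hzK).cpow (differentiableAt_const _) (hprop z hz).2.1
          · apply DifferentiableAt.cexp
            apply DifferentiableAt.div_const
            apply DifferentiableAt.fun_sum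
            intro j _
            rw [hldef]
            beta_reduce
            exact (hwwdiff j z hzK).clog ((hprop z hz).2.2 j)
        apply hdiff.congr
        intro z hz
        rw [hFdef]
        beta_reduce
        rw [(hprop z hz).1, one_mul]
      rcases ne_or_eq z₀.im 0 with him | him
      · -- z₀ nonreal
        have hball_im : ∀ z ∈ Metric.ball z₀ |z₀.im|, z.im ≠ 0 := by
          intro z hz h0
          rw [Metric.mem_ball, Complex.dist_eq] at hz
          have h1 : |z.im - z₀.im| ≤ ‖z - z₀‖ := by
            simpa [Complex.sub_im] using Complex.abs_im_le_norm (z - z₀)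
          rw [h0, zero_sub, abs_neg] at h1
          linarith
        have hsubK : Metric.ball z₀ |z₀.im| ⊆ Kᶜ := fun z hz => hnotK_im z (hball_im z hz)
        apply caseA |z₀.im| (abs_pos.2 him) hsubK
        intro z hz
        refine ⟨hc_im z (hball_im z hz), ?_, fun j => ?_⟩
        · rw [hw0def]
          beta_reduce
          exact hslit_im _ _ hab0.ne z (hball_im z hz)
        · rw [hwwdef]
          beta_reduce
          exact hslit_im _ _ (hord j).2.1.ne' z (hball_im z hz)
      · -- z₀ real
        have hz0eq : z₀ = ((z₀.re : ℝ) : ℂ) := by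
          apply Complex.ext <;> simp [him]
        by_cases hlt : z₀.re < a 0
        · have hball_re : ∀ z ∈ Metric.ball z₀ (a 0 - z₀.re), z.re < a 0 := by
            intro z hz
            rw [Metric.mem_ball, Complex.dist_eq] at hz
            have h1 : |z.re - z₀.re| ≤ ‖z - z₀‖ := by
              simpa [Complex.sub_re] using Complex.abs_re_le_norm (z - z₀)
            have h2 := (abs_lt.1 (lt_of_le_of_lt h1 hz)).2
            linarith
          have hsubK : Metric.ball z₀ (a 0 - z₀.re) ⊆ Kᶜ := by
            intro z hz hzK
            rw [hK] at hzK
            obtain ⟨x, hx, rfl⟩ := hzK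
            have := (hKrIcc hx).1
            have h2 := hball_re _ hz
            simp only [Complex.ofReal_re] at h2
            linarith
          apply caseA (a 0 - z₀.re) (by linarith) hsubK
          intro z hz
          have hzre := hball_re z hz
          refine ⟨?_, ?_, fun j => ?_⟩
          · rw [hcdef]
            beta_reduce
            split_ifs with h
            · exfalso; linarith [h.2.1]
            · rfl
          · rcases ne_or_eq z.im 0 with h0 | h0
            · rw [hw0def]; beta_reduce; exact hslit_im _ _ hab0.ne z h0
            · rw [hw0def]; beta_reduce
              apply hslit_real z h0
              apply div_pos_of_neg_of_neg <;> linarith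
          · rcases ne_or_eq z.im 0 with h0 | h0
            · rw [hwwdef]; beta_reduce; exact hslit_im _ _ (hord j).2.1.ne' z h0
            · rw [hwwdef]; beta_reduce
              apply hslit_real z h0
              have := hord j
              apply div_pos_of_neg_of_neg <;> linarith
        · by_cases hgt : b 0 < z₀.re
          · have hball_re : ∀ z ∈ Metric.ball z₀ (z₀.re - b 0), b 0 < z.re := by
              intro z hz
              rw [Metric.mem_ball, Complex.dist_eq] at hz
              have h1 : |z.re - z₀.re| ≤ ‖z - z₀‖ := by
                simpa [Complex.sub_re] using Complex.abs_re_le_norm (z - z₀)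
              have h2 := (abs_lt.1 (lt_of_le_of_lt h1 hz)).1
              linarith
            have hsubK : Metric.ball z₀ (z₀.re - b 0) ⊆ Kᶜ := by
              intro z hz hzK
              rw [hK] at hzK
              obtain ⟨x, hx, rfl⟩ := hzK
              have := (hKrIcc hx).2
              have h2 := hball_re _ hz
              simp only [Complex.ofReal_re] at h2
              linarith
            apply caseA (z₀.re - b 0) (by linarith) hsubK
            intro z hz
            have hzre := hball_re z hz
            refine ⟨?_, ?_, fun j => ?_⟩
            · rw [hcdef]
              beta_reduce
              split_ifs with h
              · exfalso; linarith [h.2.2]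
              · rfl
            · rcases ne_or_eq z.im 0 with h0 | h0
              · rw [hw0def]; beta_reduce; exact hslit_im _ _ hab0.ne z h0
              · rw [hw0def]; beta_reduce
                apply hslit_real z h0
                apply div_pos <;> linarith
            · rcases ne_or_eq z.im 0 with h0 | h0
              · rw [hwwdef]; beta_reduce; exact hslit_im _ _ (hord j).2.1.ne' z h0
              · rw [hwwdef]; beta_reduce
                apply hslit_real z h0
                have := hord j
                apply div_pos <;> linarith
          · -- z₀ in a removed interval
            have hIcc : z₀.re ∈ Set.Icc (a 0) (b 0) := ⟨not_lt.1 hlt, not_lt.1 hgt⟩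
            have hnotKr : z₀.re ∉ Kr := by
              intro h
              apply hz₀
              rw [hz0eq]
              exact hmemK _ h
            have hUn : z₀.re ∈ ⋃ j ∈ {j : ℕ | 1 ≤ j}, Set.Ioo (a j) (b j) := by
              by_contra hcon
              exact hnotKr (by rw [hKr]; exact ⟨hIcc, hcon⟩)
            rw [Set.mem_iUnion₂] at hUn
            obtain ⟨k, hk1, hkIoo⟩ := hUn
            obtain ⟨hka, hkb, hkc⟩ := hj k hk1
            set k' : ℕ := k - 1 with hk'def
            have hk'k : k' + 1 = k := Nat.sub_add_cancel hk1
            set ρ : ℝ := min (z₀.re - a k) (b k - z₀.re) with hρdef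
            have hρ0 : 0 < ρ := lt_min (by linarith [hkIoo.1]) (by linarith [hkIoo.2])
            have hball_re : ∀ z ∈ Metric.ball z₀ ρ, z.im = 0 → a k < z.re ∧ z.re < b k := by
              intro z hz h0
              rw [Metric.mem_ball, Complex.dist_eq] at hz
              have h1 : |z.re - z₀.re| ≤ ‖z - z₀‖ := by
                simpa [Complex.sub_re] using Complex.abs_re_le_norm (z - z₀)
              have h2 := abs_lt.1 (lt_of_le_of_lt h1 hz)
              have h3 := min_le_left (z₀.re - a k) (b k - z₀.re)
              have h4 := min_le_right (z₀.re - a k) (b k - z₀.re)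
              rw [← hρdef] at h3 h4
              constructor <;> [linarith [h2.1]; linarith [h2.2]]
            have hsubK : Metric.ball z₀ ρ ⊆ Kᶜ := by
              intro z hz hzK
              rw [hK] at hzK
              obtain ⟨x, hx, rfl⟩ := hzK
              have h0 : ((x : ℝ) : ℂ).im = 0 := by simp
              obtain ⟨h1, h2⟩ := hball_re _ hz h0
              simp only [Complex.ofReal_re] at h1 h2
              exact hmemIoo x k hk1 ⟨h1, h2⟩ hx
            have hpair : ∀ z ∈ Metric.ball z₀ ρ,
                w0 z * ww k' z ∈ Complex.slitPlane ∧
                c z * w0 z ^ (1/2 : ℂ) * ww k' z ^ (1/2 : ℂ) =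
                  (w0 z * ww k' z) ^ (1/2 : ℂ) := by
              intro z hz
              have hzK : z ∈ Kᶜ := hsubK hz
              rcases lt_trichotomy z.im 0 with him' | him' | him'
              · obtain ⟨hs, he⟩ := sqrt_pair_mul (himwwn k' z hzK him') (himw0n z hzK him')
                refine ⟨by rwa [mul_comm], ?_⟩
                rw [hc_im z him'.ne, one_mul, mul_comm (w0 z) (ww k' z), he]
                ring
              · have hre := hball_re z hz him'
                have hzeq : z = ((z.re : ℝ) : ℂ) := by
                  apply Complex.ext <;> simp [him']
                have hw0eq : w0 z = (((z.re - a 0) / (z.re - b 0) : ℝ) : ℂ) := by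
                  rw [hw0def]
                  beta_reduce
                  conv_lhs => rw [hzeq]
                  exact aux_real_div z.re (a 0) (b 0)
                have hwweq : ww k' z = (((z.re - b k) / (z.re - a k) : ℝ) : ℂ) := by
                  rw [hwwdef]
                  beta_reduce
                  rw [hk'k]
                  conv_lhs => rw [hzeq]
                  exact aux_real_div z.re (b k) (a k)
                have hw0im : (w0 z).im = 0 := by rw [hw0eq]; exact Complex.ofReal_im _
                have hw0re : (w0 z).re < 0 := by
                  rw [hw0eq]
                  simp only [Complex.ofReal_re]
                  apply div_neg_of_pos_of_neg <;> linarith [hre.1, hre.2]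
                have hwwim : (ww k' z).im = 0 := by rw [hwweq]; exact Complex.ofReal_im _
                have hwwre : (ww k' z).re < 0 := by
                  rw [hwweq]
                  simp only [Complex.ofReal_re]
                  apply div_neg_of_neg_of_pos <;> linarith [hre.1, hre.2]
                obtain ⟨hs, he⟩ := sqrt_negreal_mul hw0im hw0re hwwim hwwre
                refine ⟨hs, ?_⟩
                have hcz : c z = -1 := by
                  rw [hcdef]
                  beta_reduce
                  rw [if_pos ⟨him', by linarith [hre.1], by linarith [hre.2]⟩]
                rw [hcz, he]
                ring
              · obtain ⟨hs, he⟩ := sqrt_pair_mul (himw0p z hzK him') (himwwp k' z hzK him')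
                refine ⟨hs, ?_⟩
                rw [hc_im z him'.ne', one_mul, he]
            have hother : ∀ z ∈ Metric.ball z₀ ρ, ∀ j : ℕ, j ≠ k' →
                ww j z ∈ Complex.slitPlane := by
              intro z hz j hjk
              rcases ne_or_eq z.im 0 with h0 | h0
              · rw [hwwdef]; beta_reduce; exact hslit_im _ _ (hord j).2.1.ne' z h0
              · have hre := hball_re z hz h0
                have hnotIcc : z.re ∉ Set.Icc (a (j+1)) (b (j+1)) := by
                  intro hmem
                  exact Set.disjoint_left.1 (hdisj (j+1) k (by omega) hk1 (by omega)) hmem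
                    ⟨hre.1.le, hre.2.le⟩
                rw [Set.mem_Icc, not_and_or, not_le, not_le] at hnotIcc
                rw [hwwdef]
                beta_reduce
                apply hslit_real z h0
                have := hord j
                rcases hnotIcc with h | h
                · apply div_pos_of_neg_of_neg <;> linarith
                · apply div_pos <;> linarith
            refine ⟨ρ, hρ0, hsubK, ?_⟩
            rw [Filter.eventually_atTop]
            refine ⟨k, fun n hn => ?_⟩
            have hk'range : k' ∈ Finset.range n := Finset.mem_range.2 (by omega)
            have hHdiff : DifferentiableOn ℂ
                (fun z => (w0 z * ww k' z) ^ (1/2 : ℂ) *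
                  Complex.exp ((∑ j ∈ (Finset.range n).erase k', l j z) / 2))
                (Metric.ball z₀ ρ) := by
              intro z hz
              apply DifferentiableAt.differentiableWithinAt
              have hzK := hsubK hz
              apply DifferentiableAt.mul
              · exact ((hw0diff z hzK).mul (hwwdiff k' z hzK)).cpow (differentiableAt_const _)
                  (hpair z hz).1
              · apply DifferentiableAt.cexp
                apply DifferentiableAt.div_const
                apply DifferentiableAt.fun_sum
                intro j hjmem
                rw [hldef]
                beta_reduce
                exact (hwwdiff j z hzK).clog (hother z hz j (Finset.mem_erase.1 hjmem).1)
            apply hHdiff.congr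
            intro z hz
            have hzK := hsubK hz
            have hsplit : (∑ j ∈ Finset.range n, l j z) =
                l k' z + ∑ j ∈ (Finset.range n).erase k', l j z :=
              (Finset.add_sum_erase _ _ hk'range).symm
            rw [hFdef]
            beta_reduce
            rw [hsplit, add_div, Complex.exp_add, hexp_half k' z hzK, ← (hpair z hz).2]
            ring
    obtain ⟨ρ, hρ0, hρK, hρF⟩ := key
    have hcb : Metric.closedBall z₀ (ρ/2) ⊆ Kᶜ :=
      (Metric.closedBall_subset_ball (by linarith)).trans hρK
    have huc := (hUC _ hcb (isCompact_closedBall _ _)).mono Metric.ball_subset_closedBall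
    have hdOn := huc.tendstoLocallyUniformlyOn.differentiableOn
      (hρF.mono fun n hn => hn.mono (Metric.ball_subset_ball (by linarith)))
      Metric.isOpen_ball
    exact (hdOn.differentiableAt (Metric.isOpen_ball.mem_nhds
      (Metric.mem_ball_self (by linarith)))).differentiableWithinAt
  · -- square identity
    intro z hz
    have h1 := (hUC {z} (Set.singleton_subset_iff.2 hz) isCompact_singleton).tendsto_at
      (Set.mem_singleton z)
    have h2 := (hGlim {z} (Set.singleton_subset_iff.2 hz) isCompact_singleton).tendsto_at
      (Set.mem_singleton z)
    exact tendsto_nhds_unique ((h1.pow 2).congr fun n => hF2 n z hz) h2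
  · -- limit at infinity
    have hnorm_big : ∀ C : ℝ, ∀ᶠ z : ℂ in Bornology.cobounded ℂ, C < ‖z‖ :=
      fun C => tendsto_norm_cobounded_atTop.eventually (eventually_gt_atTop C)
    have hbigK : ∀ z : ℂ, M < ‖z‖ → z ∈ Kᶜ := by
      intro z hz hzK
      have := hKabs z hzK
      linarith
    have hbigc : ∀ z : ℂ, M < ‖z‖ → c z = 1 := by
      intro z hz
      rw [hcdef]
      beta_reduce
      split_ifs with h
      · exfalso
        obtain ⟨him, h1, h2⟩ := h
        have hzeq : z = ((z.re : ℝ) : ℂ) := by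
          apply Complex.ext
          · simp
          · simpa using him
        have habs : ‖z‖ = |z.re| := by
          conv_lhs => rw [hzeq]
          rw [Complex.norm_real, Real.norm_eq_abs]
        have := habs_le_M z.re h1.le h2.le
        rw [habs] at hz
        linarith
      · rfl
    have hMlt : ∀ (x : ℝ) (z : ℂ), (x : ℂ) ∈ K → ‖z‖ - M ≤ ‖z - (x : ℂ)‖ := by
      intro x z hx
      have h1 : ‖((x : ℝ) : ℂ)‖ ≤ M := by
        exact hKabs _ hx
      have h2 := norm_sub_norm_le z ((x : ℝ) : ℂ)
      linarith
    have hbound_tend : ∀ C : ℝ, Tendsto (fun z : ℂ => C / (‖z‖ - M))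
        (Bornology.cobounded ℂ) (𝓝 0) := by
      intro C
      have h1 : Tendsto (fun t : ℝ => C / (t - M)) atTop (𝓝 0) := by
        apply Tendsto.div_atTop (tendsto_const_nhds)
        simpa [sub_eq_add_neg] using tendsto_atTop_add_const_right atTop (-M) tendsto_id
      exact h1.comp tendsto_norm_cobounded_atTop
    have hw0tend : Tendsto w0 (Bornology.cobounded ℂ) (𝓝 1) := by
      rw [tendsto_iff_norm_sub_tendsto_zero]
      apply squeeze_zero' (g := fun z : ℂ => (b 0 - a 0) / (‖z‖ - M))
        (.of_forall fun z => norm_nonneg _) ?_ (hbound_tend (b 0 - a 0))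
      filter_upwards [hnorm_big (M + 1)] with z hz
      have hzK : z ∈ Kᶜ := hbigK z (by linarith)
      have hne : z - ((b 0 : ℝ) : ℂ) ≠ 0 := hsub_ne z hzK _ (hmemK _ hKr0.2)
      have heq : w0 z - 1 = (((b 0 : ℝ) : ℂ) - ((a 0 : ℝ) : ℂ)) / (z - ((b 0 : ℝ) : ℂ)) := by
        rw [hw0def]
        field_simp
        ring
      rw [heq]
      rw [norm_div]
      have hnum : ‖((b 0 : ℝ) : ℂ) - ((a 0 : ℝ) : ℂ)‖ = b 0 - a 0 := by
        rw [show ((b 0 : ℝ) : ℂ) - ((a 0 : ℝ) : ℂ) = ((b 0 - a 0 : ℝ) : ℂ) by push_cast; ring,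
          Complex.norm_real, Real.norm_eq_abs, _root_.abs_of_pos (by linarith)]
      rw [hnum]
      apply div_le_div_of_nonneg_left (by linarith) (by linarith)
      exact hMlt (b 0) z (hmemK _ hKr0.2)
    have hΦtend : Tendsto (fun z : ℂ => ∑' j : ℕ, l j z) (Bornology.cobounded ℂ) (𝓝 0) := by
      rw [tendsto_zero_iff_norm_tendsto_zero]
      apply squeeze_zero' (g := fun z : ℂ => (3/2 * S) / (‖z‖ - M))
        (.of_forall fun z => norm_nonneg _) ?_ (hbound_tend (3/2 * S))
      filter_upwards [hnorm_big (M + 2*(b 0 - a 0) + 1)] with z hz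
      have hzK : z ∈ Kᶜ := hbigK z (by linarith)
      have hdenpos : 0 < ‖z‖ - M := by linarith
      have hterm : ∀ j : ℕ, ‖l j z‖ ≤ (b (j+1) - a (j+1)) * (3/2 / (‖z‖ - M)) := by
        intro j
        have hden : ‖z‖ - M ≤ ‖z - ((a (j+1) : ℝ) : ℂ)‖ :=
          hMlt _ z (hmemK _ (hKrend (j+1) (by omega)).1)
        have hne : z - ((a (j+1) : ℝ) : ℂ) ≠ 0 :=
          hsub_ne z hzK _ (hmemK _ (hKrend (j+1) (by omega)).1)
        have heq : ww j z - 1 = (((a (j+1) : ℝ) : ℂ) - ((b (j+1) : ℝ) : ℂ)) /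
            (z - ((a (j+1) : ℝ) : ℂ)) := by
          rw [hwwdef]
          field_simp
          ring
        have hww1' : ‖ww j z - 1‖ ≤ (b (j+1) - a (j+1)) / (‖z‖ - M) := by
          rw [heq, norm_div]
          have hnum : ‖((a (j+1) : ℝ) : ℂ) - ((b (j+1) : ℝ) : ℂ)‖ = b (j+1) - a (j+1) := by
            rw [show ((a (j+1) : ℝ) : ℂ) - ((b (j+1) : ℝ) : ℂ) =
              ((a (j+1) - b (j+1) : ℝ) : ℂ) by push_cast; ring,
              Complex.norm_real, Real.norm_eq_abs,
              _root_.abs_of_neg (by linarith [hlen_pos j]), neg_sub]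
          rw [hnum]
          exact div_le_div_of_nonneg_left (hlen_pos j).le hdenpos hden
        have hlen_le : b (j+1) - a (j+1) ≤ b 0 - a 0 := by
          have := hord j
          linarith
        have hhalf : ‖ww j z - 1‖ ≤ 1/2 := by
          refine hww1'.trans ?_
          rw [div_le_iff₀ hdenpos]
          nlinarith
        have hlb := Complex.norm_log_one_add_half_le_self (z := ww j z - 1) hhalf
        rw [(by ring : (1 : ℂ) + (ww j z - 1) = ww j z)] at hlb
        have hll : ‖l j z‖ = ‖Complex.log (ww j z)‖ := by rw [hldef]
        rw [hll]
        calc ‖Complex.log (ww j z)‖ ≤ 3/2 * ‖ww j z - 1‖ := hlb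
        _ ≤ 3/2 * ((b (j+1) - a (j+1)) / (‖z‖ - M)) := by
            apply mul_le_mul_of_nonneg_left hww1' (by norm_num)
        _ = (b (j+1) - a (j+1)) * (3/2 / (‖z‖ - M)) := by ring
      have hsummul : Summable (fun j : ℕ => (b (j+1) - a (j+1)) * (3/2 / (‖z‖ - M))) :=
        hsumlen.mul_right _
      have hsumm : Summable (fun j : ℕ => ‖l j z‖) :=
        Summable.of_nonneg_of_le (fun _ => norm_nonneg _) hterm hsummul
      calc ‖∑' j : ℕ, l j z‖ ≤ ∑' j : ℕ, ‖l j z‖ := norm_tsum_le_tsum_norm hsumm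
      _ ≤ ∑' j : ℕ, (b (j+1) - a (j+1)) * (3/2 / (‖z‖ - M)) := Summable.tsum_le_tsum hterm hsumm hsummul
      _ = S * (3/2 / (‖z‖ - M)) := by rw [tsum_mul_right]
      _ = (3/2 * S) / (‖z‖ - M) := by ring
    have h1 : Tendsto (fun z => w0 z ^ (1/2 : ℂ)) (Bornology.cobounded ℂ) (𝓝 1) := by
      have hc : ContinuousAt (fun w : ℂ => w ^ (1/2 : ℂ)) 1 :=
        continuousAt_cpow_const (Or.inl (by norm_num))
      have := hc.tendsto.comp hw0tend
      simpa [Function.comp_def] using this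
    have h2 : Tendsto (fun z => Complex.exp ((∑' j : ℕ, l j z) / 2))
        (Bornology.cobounded ℂ) (𝓝 1) := by
      have h0 : Tendsto (fun z : ℂ => (∑' j : ℕ, l j z) / 2) (Bornology.cobounded ℂ)
          (𝓝 0) := by simpa using hΦtend.div_const 2
      have := (Complex.continuous_exp.tendsto 0).comp h0
      simpa [Function.comp_def] using this
    have h3 := h1.mul h2
    rw [mul_one] at h3
    apply h3.congr'
    filter_upwards [hnorm_big M] with z hz
    rw [hfdef]
    beta_reduce
    rw [hbigc z hz, one_mul]
end
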